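/- arXiv:1907.02399 — 4 statements merged into one kernel-verified Lean document; each statement's English description precedes it below -/
import Mathlib

section
/- Let f : ℝⁿ → ℝⁿ be a set-valued map that is upper semicontinuous with nonempty compact convex values, and let x* ∈ ℝⁿ. Suppose f is bounded by M on the closed ball of radius ρ̂ around x*, and set ρ̄ = ρ̂/(M+2). Then for any x with |x−x*| + |t| ≤ ρ̄ and any absolutely continuous curve ξ : [0∧t, 0∨t] → ℝⁿ with ξ(0) = x and ξ'(s) ∈ f(ξ(s)) for a.e. s, one has |ξ(s) − x*| ≤ (M+1)(|s| + |x−x*|) for all s in the interval. -/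
open Metric Set MeasureTheory
open scoped ENNReal Topology

/-- A set-valued vector field of class C^{-1,1}: upper semicontinuous with nonempty compact
convex values. -/
def C11Field {n : ℕ} (f : EuclideanSpace ℝ (Fin n) → Set (EuclideanSpace ℝ (Fin n))) : Prop :=
  ∀ x, (f x).Nonempty ∧ IsCompact (f x) ∧ Convex ℝ (f x) ∧
    ∀ ε > (0 : ℝ), ∃ δ > (0 : ℝ), ∀ y, ‖y - x‖ < δ → f y ⊆ Metric.thickening ε (f x)

/-- `ξ` is an (absolutely continuous) integral curve of the set-valued field `f` on the time
interval between `0` and `t`, with a.e. derivative `v` satisfying the differential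
inclusion `v s ∈ f (ξ s)`. -/
def IsSolutionOn {n : ℕ} (f : EuclideanSpace ℝ (Fin n) → Set (EuclideanSpace ℝ (Fin n)))
    (ξ v : ℝ → EuclideanSpace ℝ (Fin n)) (t : ℝ) : Prop :=
  IntervalIntegrable v volume 0 t ∧
  (∀ s ∈ Set.uIcc (0 : ℝ) t, ξ s = ξ 0 + ∫ τ in (0 : ℝ)..s, v τ) ∧
  (∀ᵐ s ∂volume, s ∈ Set.uIcc (0 : ℝ) t → v s ∈ f (ξ s))

lemma stmt0_aux {n : ℕ} (xstar : EuclideanSpace ℝ (Fin n)) (M ρhat : ℝ) (hM : 0 ≤ M)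
    (hρ : 0 < ρhat) (t : ℝ) (ht : 0 ≤ t) (ξ v : ℝ → EuclideanSpace ℝ (Fin n))
    (hxt : ‖ξ 0 - xstar‖ + t ≤ ρhat / (M + 2))
    (hInt : IntervalIntegrable v volume 0 t)
    (hrep : ∀ s ∈ Set.Icc (0:ℝ) t, ξ s = ξ 0 + ∫ τ in (0:ℝ)..s, v τ)
    (hae : ∀ᵐ s ∂volume, s ∈ Set.Icc (0:ℝ) t → ‖ξ s - xstar‖ ≤ ρhat → ‖v s‖ ≤ M) :
    ∀ s ∈ Set.Icc (0:ℝ) t, ‖ξ s - xstar‖ ≤ ‖ξ 0 - xstar‖ + M * s := by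
  set C := ‖ξ 0 - xstar‖ with hC
  have hC0 : 0 ≤ C := norm_nonneg _
  have hM2 : (0:ℝ) < M + 2 := by linarith
  have hCt : (C + t) * (M + 2) ≤ ρhat := (le_div_iff₀ hM2).mp hxt
  -- key numeric inequality
  have keyρ : ∀ s ∈ Set.Icc (0:ℝ) t, C + M * s < ρhat := by
    intro s hs
    rcases eq_or_lt_of_le (by positivity : (0:ℝ) ≤ C + t) with h | h
    · have ht0 : t = 0 := by linarith [ht, hC0, h.symm ▸ (rfl : C + t = C + t)]
      have hs0 : s = 0 := le_antisymm (hs.2.trans_eq ht0) hs.1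
      have hC0' : C = 0 := by linarith
      rw [hs0, hC0']; simpa using hρ
    · nlinarith [mul_le_mul_of_nonneg_left hs.2 hM, mul_nonneg hM hC0]
  -- basic estimate
  have est : ∀ s ∈ Set.Icc (0:ℝ) t, (∀ τ ∈ Set.Ico (0:ℝ) s, ‖ξ τ - xstar‖ ≤ ρhat) →
      ‖ξ s - xstar‖ ≤ C + M * s := by
    intro s hs hball
    have hint : ‖∫ τ in (0:ℝ)..s, v τ‖ ≤ M * |s - 0| := by
      apply intervalIntegral.norm_integral_le_of_norm_le_const_ae
      have hne : ∀ᵐ τ ∂(volume : Measure ℝ), τ ≠ s := by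
        rw [ae_iff]
        simpa using measure_singleton s
      filter_upwards [hae, hne] with τ hτ hτs hmem
      rw [Set.uIoc_of_le hs.1] at hmem
      have h1 : τ ∈ Set.Ico (0:ℝ) s := ⟨le_of_lt hmem.1, lt_of_le_of_ne hmem.2 hτs⟩
      exact hτ ⟨h1.1, h1.2.le.trans hs.2⟩ (hball τ h1)
    calc ‖ξ s - xstar‖ = ‖(ξ 0 - xstar) + ∫ τ in (0:ℝ)..s, v τ‖ := by
          rw [hrep s hs, add_sub_right_comm]
      _ ≤ C + ‖∫ τ in (0:ℝ)..s, v τ‖ := norm_add_le _ _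
      _ ≤ C + M * |s - 0| := by linarith
      _ = C + M * s := by rw [sub_zero, abs_of_nonneg hs.1]
  -- the good set
  set A : Set ℝ := {s | s ∈ Set.Icc (0:ℝ) t ∧ ∀ τ ∈ Set.Icc (0:ℝ) s, ‖ξ τ - xstar‖ ≤ ρhat}
    with hA
  have h0A : (0:ℝ) ∈ A := by
    refine ⟨⟨le_refl _, ht⟩, ?_⟩
    intro τ hτ
    have : τ = 0 := le_antisymm hτ.2 hτ.1
    subst this
    have := keyρ 0 ⟨le_refl _, ht⟩
    simpa using this.le
  have hAne : A.Nonempty := ⟨0, h0A⟩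
  have hAbdd : BddAbove A := ⟨t, fun s hs => hs.1.2⟩
  set T := sSup A with hT
  have hT0 : 0 ≤ T := le_csSup hAbdd h0A
  have hTt : T ≤ t := csSup_le hAne fun s hs => hs.1.2
  have hTico : ∀ τ ∈ Set.Ico (0:ℝ) T, ‖ξ τ - xstar‖ ≤ ρhat := by
    intro τ hτ
    obtain ⟨s, hsA, hτs⟩ := exists_lt_of_lt_csSup hAne hτ.2
    exact hsA.2 τ ⟨hτ.1, hτs.le⟩
  have hTest : ‖ξ T - xstar‖ ≤ C + M * T := est T ⟨hT0, hTt⟩ hTico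
  have hTball : ‖ξ T - xstar‖ < ρhat := hTest.trans_lt (keyρ T ⟨hT0, hTt⟩)
  have hTA : T ∈ A := by
    refine ⟨⟨hT0, hTt⟩, fun τ hτ => ?_⟩
    rcases lt_or_eq_of_le hτ.2 with h | h
    · exact hTico τ ⟨hτ.1, h⟩
    · subst h; exact hTball.le
  -- T = t
  have hTeq : T = t := by
    by_contra hne
    have hTlt : T < t := lt_of_le_of_ne hTt hne
    -- continuity of ξ on Icc 0 t
    have hcont : ContinuousOn ξ (Set.Icc 0 t) := by
      have h1 : ContinuousOn (fun s => ξ 0 + ∫ τ in (0:ℝ)..s, v τ) (Set.uIcc 0 t) :=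
        continuousOn_const.add
          (intervalIntegral.continuousOn_primitive_interval' hInt Set.left_mem_uIcc)
      rw [Set.uIcc_of_le ht] at h1
      exact h1.congr hrep
    have hcw : ContinuousWithinAt (fun s => ‖ξ s - xstar‖) (Set.Icc 0 t) T :=
      ((hcont T ⟨hT0, hTt⟩).sub continuousWithinAt_const).norm
    have hev : ∀ᶠ s in 𝓝[Set.Icc 0 t] T, ‖ξ s - xstar‖ < ρhat :=
      hcw.eventually_lt continuousWithinAt_const hTball
    rw [eventually_nhdsWithin_iff] at hev
    obtain ⟨δ, hδ, hδball⟩ := Metric.eventually_nhds_iff.mp hev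
    set s₁ := min (T + δ/2) t with hs₁
    have hs₁T : T < s₁ := lt_min (by linarith) hTlt
    have hs₁t : s₁ ≤ t := min_le_right _ _
    have hs₁A : s₁ ∈ A := by
      refine ⟨⟨hT0.trans hs₁T.le, hs₁t⟩, fun τ hτ => ?_⟩
      rcases le_or_gt τ T with h | h
      · exact hTA.2 τ ⟨hτ.1, h⟩
      · have h1 : dist τ T < δ := by
          rw [Real.dist_eq, abs_of_pos (by linarith)]
          have := hτ.2.trans (min_le_left _ _ : s₁ ≤ T + δ/2)
          linarith
        exact (hδball h1 ⟨hτ.1, hτ.2.trans hs₁t⟩).le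
    exact absurd (le_csSup hAbdd hs₁A) (not_le.mpr hs₁T)
  intro s hs
  refine est s hs fun τ hτ => ?_
  exact hTA.2 τ ⟨hτ.1, by rw [hTeq]; exact hτ.2.le.trans hs.2⟩

/-- if the C^{-1,1} set-valued field f is bounded by M on the closed ball of
radius ρ̂ around x*, ρ̄ = ρ̂/(M+2), and |x − x*| + |t| ≤ ρ̄, then every integral curve ξ of f
with ξ(0) = x stays in the region ‖ξ(s) − x*‖ ≤ (M+1)(|s| + ‖x − x*‖) for s between 0 and t. -/
theorem stmt_0 {n : ℕ} (f : EuclideanSpace ℝ (Fin n) → Set (EuclideanSpace ℝ (Fin n)))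
    (hf : C11Field f) (xstar : EuclideanSpace ℝ (Fin n))
    (M ρhat : ℝ) (hM : 0 ≤ M) (hρ : 0 < ρhat)
    (hbound : ∀ y, ‖y - xstar‖ ≤ ρhat → ∀ w ∈ f y, ‖w‖ ≤ M)
    (x : EuclideanSpace ℝ (Fin n)) (t : ℝ) (hxt : ‖x - xstar‖ + |t| ≤ ρhat / (M + 2))
    (ξ v : ℝ → EuclideanSpace ℝ (Fin n)) (hξ0 : ξ 0 = x) (hsol : IsSolutionOn f ξ v t) :
    ∀ s ∈ Set.uIcc (0 : ℝ) t, ‖ξ s - xstar‖ ≤ (M + 1) * (|s| + ‖x - xstar‖) := by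
  obtain ⟨hInt, hrep, haes⟩ := hsol
  rcases le_total 0 t with ht | ht
  · -- nonnegative time
    rw [Set.uIcc_of_le ht] at hrep haes ⊢
    have key := stmt0_aux xstar M ρhat hM hρ t ht ξ v
      (by rw [hξ0]; rwa [abs_of_nonneg ht] at hxt) hInt hrep
      (by filter_upwards [haes] with s h1 h2 h3
          exact hbound (ξ s) h3 (v s) (h1 h2))
    intro s hs
    have := key s hs
    rw [hξ0] at this
    have habs : |s| = s := abs_of_nonneg hs.1
    nlinarith [norm_nonneg (x - xstar), hs.1, mul_nonneg hM (norm_nonneg (x - xstar)),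
      mul_nonneg hM hs.1]
  · -- nonpositive time: reflect
    set η : ℝ → EuclideanSpace ℝ (Fin n) := fun s => ξ (-s) with hη
    set w : ℝ → EuclideanSpace ℝ (Fin n) := fun s => -v (-s) with hw
    have ht' : 0 ≤ -t := by linarith
    have hIcc : Set.uIcc (0:ℝ) t = Set.Icc t 0 := by
      rw [Set.uIcc_of_ge ht]
    have hInt' : IntervalIntegrable w volume 0 (-t) := by
      have := ((IntervalIntegrable.iff_comp_neg (by simp)).mp hInt).neg
      rw [neg_zero] at this; exact this
    have hrep' : ∀ s ∈ Set.Icc (0:ℝ) (-t), η s = η 0 + ∫ τ in (0:ℝ)..s, w τ := by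
      intro s hs
      have hmem : -s ∈ Set.uIcc (0:ℝ) t := by
        rw [hIcc]; constructor <;> [linarith [hs.2]; linarith [hs.1]]
      have h1 : (∫ τ in (0:ℝ)..s, w τ) = ∫ τ in (0:ℝ)..(-s), v τ := by
        rw [show w = fun τ => -v (-τ) from rfl, intervalIntegral.integral_neg,
          intervalIntegral.integral_comp_neg (f := v), neg_zero,
          intervalIntegral.integral_symm, neg_neg]
      rw [h1]
      simpa [hη] using hrep (-s) hmem
    have haes' : ∀ᵐ s ∂(volume : Measure ℝ), s ∈ Set.Icc (0:ℝ) (-t) →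
        ‖η s - xstar‖ ≤ ρhat → ‖w s‖ ≤ M := by
      have hqmp := (Measure.measurePreserving_neg (volume : Measure ℝ)).quasiMeasurePreserving
      filter_upwards [hqmp.ae haes] with s h1 h2 h3
      have hmem : -s ∈ Set.uIcc (0:ℝ) t := by
        rw [hIcc]; constructor <;> [linarith [h2.2]; linarith [h2.1]]
      have := hbound (ξ (-s)) h3 (v (-s)) (h1 hmem)
      simpa [hw] using this
    have key := stmt0_aux xstar M ρhat hM hρ (-t) ht' η w
      (by show ‖ξ (-0) - xstar‖ + -t ≤ _
          rw [neg_zero, hξ0]; rwa [abs_of_nonpos ht] at hxt) hInt' hrep' haes'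
    intro s hs
    rw [hIcc] at hs
    have hms : -s ∈ Set.Icc (0:ℝ) (-t) := ⟨by linarith [hs.2], by linarith [hs.1]⟩
    have := key (-s) hms
    simp only [hη, neg_neg, neg_zero] at this
    rw [hξ0] at this
    have habs : |s| = -s := abs_of_nonpos hs.2
    nlinarith [norm_nonneg (x - xstar), hms.1, mul_nonneg hM (norm_nonneg (x - xstar)),
      mul_nonneg hM hms.1]
end

section
/- Let f₁, …, f_m be upper semicontinuous set-valued vector fields on ℝⁿ with nonempty compact convex values and let x* ∈ ℝⁿ. If y belongs to the composition of the flows ψ^{f₁}_{s₁} ∘ ⋯ ∘ ψ^{f_m}_{s_m}(x) with s₁,…,s_m ≥ 0 and t = s₁+⋯+s_m, then dist( y − x, Σᵢ sᵢ fᵢ(x*) ) = t·γ(O(t + |x−x*|)) as t + |x−x*| → 0, where γ is the sum of the upper semicontinuity moduli of the fᵢ at x*. -/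
open Metric Set MeasureTheory
open scoped ENNReal Topology

/-- A chain of integral curves: `y` is reached from `x` by following the set-valued fields
`f 0, …, f (m-1)` for the respective (nonnegative) times `s 0, …, s (m-1)`, i.e.
`y ∈ ψ^{f_m}_{s_m} ∘ ⋯ ∘ ψ^{f_1}_{s_1}(x)`. -/
def FlowChain {n m : ℕ} (f : Fin m → EuclideanSpace ℝ (Fin n) → Set (EuclideanSpace ℝ (Fin n)))
    (s : Fin m → ℝ) (x y : EuclideanSpace ℝ (Fin n)) : Prop :=
  ∃ z : Fin (m + 1) → EuclideanSpace ℝ (Fin n), z 0 = x ∧ z (Fin.last m) = y ∧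
    ∀ i : Fin m, ∃ ξ v : ℝ → EuclideanSpace ℝ (Fin n),
      ξ 0 = z i.castSucc ∧ ξ (s i) = z i.succ ∧ IsSolutionOn (f i) ξ v (s i)

/-- Confinement lemma: an integral curve of a field whose speed is bounded by `M` inside the
ball of radius `δ₀` around `xstar` stays within `‖ξ 0 - xstar‖ + M τ` of `xstar`, provided
there is enough margin. -/
lemma confine {n : ℕ} (f : EuclideanSpace ℝ (Fin n) → Set (EuclideanSpace ℝ (Fin n)))
    (xstar : EuclideanSpace ℝ (Fin n)) (δ₀ M : ℝ) (hM : 0 ≤ M)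
    (hbd : ∀ z, ‖z - xstar‖ < δ₀ → ∀ w ∈ f z, ‖w‖ ≤ M)
    (ξ v : ℝ → EuclideanSpace ℝ (Fin n)) (s : ℝ) (hs : 0 ≤ s)
    (hsol : IsSolutionOn f ξ v s)
    (hmargin : ‖ξ 0 - xstar‖ + M * s < δ₀) :
    ∀ τ ∈ Set.Icc 0 s, ‖ξ τ - xstar‖ ≤ ‖ξ 0 - xstar‖ + M * τ := by
  obtain ⟨hint, hξ, hv⟩ := hsol
  have huIcc : Set.uIcc (0 : ℝ) s = Set.Icc 0 s := uIcc_of_le hs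
  rw [huIcc] at hξ
  have hvae : ∀ᵐ σ ∂volume, σ ∈ Set.Icc (0:ℝ) s → v σ ∈ f (ξ σ) := by
    filter_upwards [hv] with σ h hσ
    exact h (huIcc ▸ hσ)
  have hcont : ContinuousOn ξ (Set.Icc 0 s) := by
    have h1 : ContinuousOn (fun τ => ξ 0 + ∫ t in (0:ℝ)..τ, v t) (Set.Icc 0 s) := by
      have := intervalIntegral.continuousOn_primitive_interval'
        (μ := volume) (b₁ := (0:ℝ)) (b₂ := s) hint Set.left_mem_uIcc
      rw [huIcc] at this
      exact continuousOn_const.add this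
    exact h1.congr hξ
  set S : Set ℝ := {τ : ℝ | ‖ξ τ - xstar‖ ≤ ‖ξ 0 - xstar‖ + M * τ} with hS
  have hclosed : IsClosed (S ∩ Set.Icc 0 s) := by
    have heq : S ∩ Set.Icc 0 s =
        Set.Icc 0 s ∩ (fun τ => ‖ξ τ - xstar‖ - (‖ξ 0 - xstar‖ + M * τ)) ⁻¹' Set.Iic 0 := by
      ext τ
      simp only [Set.mem_inter_iff, Set.mem_setOf_eq, Set.mem_preimage, Set.mem_Iic, hS,
        sub_nonpos, and_comm]
    rw [heq]
    refine ContinuousOn.preimage_isClosed_of_isClosed ?_ isClosed_Icc isClosed_Iic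
    exact ((hcont.sub continuousOn_const).norm).sub
      (continuousOn_const.add (continuousOn_const.mul continuousOn_id))
  have ha : (0:ℝ) ∈ S := by simp [hS]
  have hsub : Set.Icc (0:ℝ) s ⊆ S := by
    refine hclosed.Icc_subset_of_forall_exists_gt ha ?_
    rintro τ ⟨hτS, hτ0, hτs⟩ y hy
    have hξτbd : ‖ξ τ - xstar‖ ≤ ‖ξ 0 - xstar‖ + M * τ := hτS
    have hξτδ : ‖ξ τ - xstar‖ < δ₀ := by
      have : M * τ ≤ M * s := mul_le_mul_of_nonneg_left hτs.le hM
      linarith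
    have hτIcc : τ ∈ Set.Icc (0:ℝ) s := ⟨hτ0, hτs.le⟩
    have hcw := hcont τ hτIcc
    rw [Metric.continuousWithinAt_iff] at hcw
    obtain ⟨η, hη, hηp⟩ := hcw (δ₀ - ‖ξ τ - xstar‖) (by linarith)
    set τ' := min y (min (τ + η / 2) s) with hτ'
    have hττ' : τ < τ' := lt_min hy (lt_min (by linarith) hτs)
    have hτ's : τ' ≤ s := (min_le_right _ _).trans (min_le_right _ _)
    have hτ'η : τ' ≤ τ + η / 2 := (min_le_right _ _).trans (min_le_left _ _)
    have hτ'0 : (0:ℝ) ≤ τ' := hτ0.trans hττ'.le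
    have hptw : ∀ σ ∈ Set.Icc τ τ', ‖ξ σ - xstar‖ < δ₀ := by
      intro σ hσ
      have hσIcc : σ ∈ Set.Icc (0:ℝ) s := ⟨hτ0.trans hσ.1, hσ.2.trans hτ's⟩
      have hd : dist σ τ < η := by
        rw [Real.dist_eq, abs_of_nonneg (by linarith [hσ.1])]
        linarith [hσ.2, hτ'η]
      have := hηp hσIcc hd
      calc ‖ξ σ - xstar‖ = ‖(ξ σ - ξ τ) + (ξ τ - xstar)‖ := by rw [sub_add_sub_cancel]
        _ ≤ ‖ξ σ - ξ τ‖ + ‖ξ τ - xstar‖ := norm_add_le _ _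
        _ < (δ₀ - ‖ξ τ - xstar‖) + ‖ξ τ - xstar‖ := by
            rw [dist_eq_norm] at this; linarith
        _ = δ₀ := by ring
    have hae : ∀ᵐ σ ∂volume.restrict (Set.uIoc τ τ'), ‖v σ‖ ≤ M := by
      filter_upwards [ae_restrict_mem measurableSet_uIoc, ae_restrict_of_ae hvae] with σ h1 h2
      rw [Set.uIoc_of_le hττ'.le] at h1
      have hσIcc : σ ∈ Set.Icc (0:ℝ) s := ⟨hτ0.trans h1.1.le, h1.2.trans hτ's⟩
      exact hbd _ (hptw σ ⟨h1.1.le, h1.2⟩) _ (h2 hσIcc)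
    have hInt1 : IntervalIntegrable v volume 0 τ' :=
      hint.mono_set (by rw [Set.uIcc_of_le hτ'0, huIcc]; exact Set.Icc_subset_Icc le_rfl hτ's)
    have hInt2 : IntervalIntegrable v volume 0 τ :=
      hint.mono_set (by rw [Set.uIcc_of_le hτ0, huIcc]; exact Set.Icc_subset_Icc le_rfl hτs.le)
    have hnorm : ‖∫ σ in τ..τ', v σ‖ ≤ M * (τ' - τ) := by
      have h := intervalIntegral.norm_integral_le_abs_of_norm_le
        (g := fun _ => M) hae intervalIntegrable_const
      rwa [intervalIntegral.integral_const, smul_eq_mul, mul_comm,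
        abs_of_nonneg (mul_nonneg hM (by linarith : (0:ℝ) ≤ τ' - τ))] at h
    have hdiff : ξ τ' - ξ τ = ∫ σ in τ..τ', v σ := by
      rw [hξ τ' ⟨hτ'0, hτ's⟩, hξ τ hτIcc]
      rw [add_sub_add_left_eq_sub]
      exact (intervalIntegral.integral_interval_sub_left hInt1 hInt2)
    refine ⟨τ', ?_, hττ', min_le_left _ _⟩
    show ‖ξ τ' - xstar‖ ≤ ‖ξ 0 - xstar‖ + M * τ'
    calc ‖ξ τ' - xstar‖ = ‖(ξ τ' - ξ τ) + (ξ τ - xstar)‖ := by rw [sub_add_sub_cancel]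
      _ ≤ ‖ξ τ' - ξ τ‖ + ‖ξ τ - xstar‖ := norm_add_le _ _
      _ ≤ M * (τ' - τ) + (‖ξ 0 - xstar‖ + M * τ) := by
          rw [hdiff]; exact add_le_add hnorm hξτbd
      _ = ‖ξ 0 - xstar‖ + M * τ' := by ring
  exact fun τ hτ => hsub hτ

/-- Mean-value estimate for a segment: if a.e. velocity lies in the `r`-cthickening of a
nonempty compact convex set `C`, then the total displacement is within `s * r` of `s • u`
for some `u ∈ C`. -/
lemma segment_est {n : ℕ} (C : Set (EuclideanSpace ℝ (Fin n)))
    (hCne : C.Nonempty) (hCc : IsCompact C) (hCconv : Convex ℝ C)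
    (ξ v : ℝ → EuclideanSpace ℝ (Fin n)) (s : ℝ) (hs : 0 ≤ s)
    (hint : IntervalIntegrable v volume 0 s)
    (hξ : ∀ σ ∈ Set.Icc 0 s, ξ σ = ξ 0 + ∫ τ in (0:ℝ)..σ, v τ)
    (r : ℝ) (hr : 0 ≤ r)
    (hv : ∀ᵐ σ ∂volume, σ ∈ Set.Icc (0:ℝ) s → v σ ∈ Metric.cthickening r C) :
    ∃ u ∈ C, ‖ξ s - ξ 0 - s • u‖ ≤ s * r := by
  rcases eq_or_lt_of_le hs with heq | hspos
  · obtain ⟨u, hu⟩ := hCne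
    refine ⟨u, hu, ?_⟩
    rw [← heq]
    simp
  · set D := Metric.cthickening r C with hD
    have hDconv : Convex ℝ D := hCconv.cthickening r
    have hDclosed : IsClosed D := Metric.isClosed_cthickening
    set μ := volume.restrict (Set.Ioc (0:ℝ) s) with hμ
    have hμuniv : μ Set.univ = ENNReal.ofReal s := by
      rw [hμ, Measure.restrict_apply_univ, Real.volume_Ioc, sub_zero]
    have : IsFiniteMeasure μ := ⟨by rw [hμuniv]; exact ENNReal.ofReal_lt_top⟩
    have : NeZero μ := ⟨by
      intro h
      have := hμuniv
      rw [h] at this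
      simp only [Measure.coe_zero, Pi.zero_apply] at this
      exact absurd this.symm (by simp [ENNReal.ofReal_eq_zero, not_le, hspos])⟩
    have hvint : Integrable v μ := by
      rw [hμ]
      exact (intervalIntegrable_iff_integrableOn_Ioc_of_le hs).mp hint
    have hvmem : ∀ᵐ σ ∂μ, v σ ∈ D := by
      filter_upwards [ae_restrict_mem measurableSet_Ioc, ae_restrict_of_ae hv] with σ h1 h2
      exact h2 ⟨h1.1.le, h1.2⟩
    have havg : (⨍ σ, v σ ∂μ) ∈ D := hDconv.average_mem hDclosed hvmem hvint
    have hinf : Metric.infDist (⨍ σ, v σ ∂μ) C ≤ r := by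
      rw [hD, Metric.mem_cthickening_iff] at havg
      rw [Metric.infDist]
      calc (EMetric.infEdist (⨍ σ, v σ ∂μ) C).toReal ≤ (ENNReal.ofReal r).toReal :=
            ENNReal.toReal_mono ENNReal.ofReal_ne_top havg
        _ = r := ENNReal.toReal_ofReal hr
    obtain ⟨u, huC, hu⟩ := hCc.exists_infDist_eq_dist hCne (⨍ σ, v σ ∂μ)
    refine ⟨u, huC, ?_⟩
    have hint_eq : ξ s - ξ 0 = s • (⨍ σ, v σ ∂μ) := by
      rw [hξ s ⟨hs, le_rfl⟩, add_sub_cancel_left]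
      rw [average_eq, measureReal_def, hμuniv, ENNReal.toReal_ofReal hs, smul_smul,
        mul_inv_cancel₀ (ne_of_gt hspos), one_smul]
      rw [intervalIntegral.integral_of_le hs, hμ]
    rw [hint_eq, ← smul_sub]
    rw [norm_smul, Real.norm_of_nonneg hs]
    have : ‖(⨍ σ, v σ ∂μ) - u‖ = dist (⨍ σ, v σ ∂μ) u := (dist_eq_norm _ _).symm
    rw [this, ← hu]
    exact mul_le_mul_of_nonneg_left hinf hs

/-- for C^{-1,1} set-valued fields f₁,…,f_m and any point y of the composed
multiflow ψ^{f₁}_{s₁} ∘ ⋯ ∘ ψ^{f_m}_{s_m}(x) with sᵢ ≥ 0 and t = Σ sᵢ, one has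
dist(y − x, Σᵢ sᵢ fᵢ(x*)) ≤ t γ(K(t + |x − x*|)) for t + |x − x*| small, where γ is the sum
of the upper semicontinuity moduli of the fᵢ at x*. -/
theorem stmt_2 {n m : ℕ}
    (f : Fin m → EuclideanSpace ℝ (Fin n) → Set (EuclideanSpace ℝ (Fin n)))
    (hf : ∀ i, C11Field (f i)) (xstar : EuclideanSpace ℝ (Fin n))
    (γ : ℝ → ℝ)
    (hγ : ∀ ρ : ℝ, γ ρ = ∑ i : Fin m, sSup {d : ℝ | ∃ z w, ‖z - xstar‖ ≤ ρ ∧ w ∈ f i z ∧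
      d = Metric.infDist w (f i xstar)}) :
    ∃ K : ℝ, 0 ≤ K ∧ ∃ δ > (0 : ℝ),
      ∀ (s : Fin m → ℝ) (x y : EuclideanSpace ℝ (Fin n)), (∀ i, 0 ≤ s i) →
        (∑ i, s i) + ‖x - xstar‖ ≤ δ → FlowChain f s x y →
        Metric.infDist (y - x)
            {w : EuclideanSpace ℝ (Fin n) | ∃ vv : Fin m → EuclideanSpace ℝ (Fin n),
              (∀ i, vv i ∈ f i xstar) ∧ w = ∑ i, s i • vv i} ≤
          (∑ i, s i) * γ (K * ((∑ i, s i) + ‖x - xstar‖)) := by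
  -- upper semicontinuity radii with ε = 1
  have husc : ∀ i, ∃ δ, 0 < δ ∧ ∀ z, ‖z - xstar‖ < δ → f i z ⊆ Metric.thickening 1 (f i xstar) := by
    intro i
    obtain ⟨δ, hδ, h⟩ := (hf i xstar).2.2.2 1 one_pos
    exact ⟨δ, hδ, h⟩
  choose δf hδfpos hδf using husc
  -- norm bounds on the values at xstar
  have hbdd : ∀ i, ∃ Mi, 0 ≤ Mi ∧ ∀ w ∈ f i xstar, ‖w‖ ≤ Mi := by
    intro i
    obtain ⟨Cb, hCb⟩ := (isBounded_iff_forall_norm_le).mp (hf i xstar).2.1.isBounded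
    exact ⟨max Cb 0, le_max_right _ _, fun w hw => (hCb w hw).trans (le_max_left _ _)⟩
  choose Mf hMf0 hMf using hbdd
  set M : ℝ := (∑ i, Mf i) + 1 with hM
  have hMsum0 : 0 ≤ ∑ i, Mf i := Finset.sum_nonneg fun i _ => hMf0 i
  have hM1 : 1 ≤ M := by simp only [hM]; linarith
  have hM0 : 0 ≤ M := by linarith
  have hMfle : ∀ i, Mf i + 1 ≤ M := by
    intro i
    have := Finset.single_le_sum (fun j _ => hMf0 j) (Finset.mem_univ i)
    simp only [hM]; linarith
  set δ₀ : ℝ := ∏ i, min (δf i) 1 with hδ₀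
  have hδ₀pos : 0 < δ₀ := Finset.prod_pos fun i _ => lt_min (hδfpos i) one_pos
  have hδ₀le : ∀ i, δ₀ ≤ δf i := by
    intro i
    have h1 : δ₀ = min (δf i) 1 * ∏ j ∈ Finset.univ.erase i, min (δf j) 1 :=
      (Finset.mul_prod_erase _ _ (Finset.mem_univ i)).symm
    have h2 : ∏ j ∈ Finset.univ.erase i, min (δf j) 1 ≤ 1 :=
      Finset.prod_le_one (fun j _ => le_min (hδfpos j).le zero_le_one) fun j _ => min_le_right _ _
    have h3 : 0 ≤ min (δf i) 1 := le_min (hδfpos i).le zero_le_one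
    calc δ₀ ≤ min (δf i) 1 * 1 := by rw [h1]; exact mul_le_mul_of_nonneg_left h2 h3
      _ ≤ δf i := by rw [mul_one]; exact min_le_left _ _
  -- uniform speed bound inside the δ₀ ball
  have hspeed : ∀ (i : Fin m) z, ‖z - xstar‖ < δ₀ → ∀ w ∈ f i z, ‖w‖ ≤ M := by
    intro i z hz w hw
    have hmem := hδf i z (hz.trans_le (hδ₀le i)) hw
    rw [Metric.mem_thickening_iff] at hmem
    obtain ⟨u, hu, hdu⟩ := hmem
    calc ‖w‖ = ‖u + (w - u)‖ := by rw [add_sub_cancel]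
      _ ≤ ‖u‖ + ‖w - u‖ := norm_add_le _ _
      _ ≤ Mf i + 1 := add_le_add (hMf i u hu) (by rw [← dist_eq_norm]; exact hdu.le)
      _ ≤ M := hMfle i
  refine ⟨M, hM0, δ₀ / (2 * M), by positivity, ?_⟩
  intro s x y hs hsmall hchain
  obtain ⟨zc, hz0, hzlast, hseg⟩ := hchain
  set t : ℝ := ∑ i, s i with ht
  have ht0 : 0 ≤ t := Finset.sum_nonneg fun i _ => hs i
  set ρ : ℝ := M * (t + ‖x - xstar‖) with hρ
  have hρ0 : 0 ≤ ρ := mul_nonneg hM0 (by positivity)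
  have hρδ₀ : ρ < δ₀ := by
    have h1 : ρ ≤ M * (δ₀ / (2 * M)) := mul_le_mul_of_nonneg_left hsmall hM0
    have hMpos : 0 < M := lt_of_lt_of_le one_pos hM1
    have h2 : M * (δ₀ / (2 * M)) = δ₀ / 2 := by field_simp
    linarith
  have hbase : ‖x - xstar‖ + M * t ≤ ρ := by
    have : ‖x - xstar‖ ≤ M * ‖x - xstar‖ := le_mul_of_one_le_left (norm_nonneg _) hM1
    rw [hρ, mul_add]; linarith
  -- the moduli
  set Si : Fin m → Set ℝ := fun i => {d : ℝ | ∃ z w, ‖z - xstar‖ ≤ ρ ∧ w ∈ f i z ∧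
      d = Metric.infDist w (f i xstar)} with hSi
  have hSibdd : ∀ i, BddAbove (Si i) := by
    intro i
    refine ⟨1, ?_⟩
    rintro d ⟨zz, w, hzz, hw, rfl⟩
    have hlt : ‖zz - xstar‖ < δf i := lt_of_le_of_lt hzz (hρδ₀.trans_le (hδ₀le i))
    have hmem := hδf i zz hlt hw
    exact ((Metric.mem_thickening_iff_infDist_lt (hf i xstar).1).mp hmem).le
  have hSi0 : ∀ i, (0:ℝ) ∈ Si i := by
    intro i
    obtain ⟨w, hw⟩ := (hf i xstar).1
    exact ⟨xstar, w, by simpa using hρ0, hw, (Metric.infDist_zero_of_mem hw).symm⟩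
  have hγi0 : ∀ i, 0 ≤ sSup (Si i) := fun i => le_csSup (hSibdd i) (hSi0 i)
  -- partial sums of the times
  set p : ℕ → ℝ := fun k => ∑ j : Fin m, if (j : ℕ) < k then s j else 0 with hp
  have hp0 : p 0 = 0 := by simp [hp]
  have hpsucc : ∀ k (hk : k < m), p (k + 1) = p k + s ⟨k, hk⟩ := by
    intro k hk
    have hterm : ∀ j : Fin m, (if (j : ℕ) < k + 1 then s j else 0) =
        (if (j : ℕ) < k then s j else 0) + (if j = ⟨k, hk⟩ then s j else 0) := by
      intro j
      rcases lt_trichotomy (j : ℕ) k with h | h | h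
      · have hj : j ≠ ⟨k, hk⟩ := by
          intro hh; rw [hh] at h; exact absurd h (lt_irrefl k)
        rw [if_pos (by omega), if_pos h, if_neg hj, add_zero]
      · have hj : j = ⟨k, hk⟩ := Fin.ext (by simpa using h)
        rw [if_pos (by omega), if_neg (by omega), if_pos hj, zero_add]
      · have hj : j ≠ ⟨k, hk⟩ := by
          intro hh; rw [hh] at h; exact absurd h (lt_irrefl k)
        rw [if_neg (by omega), if_neg (by omega), if_neg hj, add_zero]
    simp only [hp]
    rw [Finset.sum_congr rfl fun j _ => hterm j, Finset.sum_add_distrib,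
      Finset.sum_ite_eq' Finset.univ (⟨k, hk⟩ : Fin m), if_pos (Finset.mem_univ _)]
  have hple : ∀ k, p k ≤ t := by
    intro k
    simp only [hp, ht]
    refine Finset.sum_le_sum fun j _ => ?_
    split
    · exact le_rfl
    · exact hs j
  have hpnn : ∀ k, 0 ≤ p k := by
    intro k
    refine Finset.sum_nonneg fun j _ => ?_
    split
    · exact hs j
    · exact le_rfl
  -- bound on the chain points
  have hbnd : ∀ k (hk : k ≤ m), ‖zc ⟨k, Nat.lt_succ_of_le hk⟩ - xstar‖ ≤ ‖x - xstar‖ + M * p k := by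
    intro k
    induction k with
    | zero =>
      intro hk
      have h0 : zc ⟨0, Nat.lt_succ_of_le hk⟩ = x := hz0
      rw [h0, hp0, mul_zero, add_zero]
    | succ k ih =>
      intro hk
      have hk' : k < m := hk
      have ihk := ih hk'.le
      obtain ⟨ξ, v, hξ0, hξs, hsol⟩ := hseg ⟨k, hk'⟩
      have hξ0' : ξ 0 = zc ⟨k, Nat.lt_succ_of_le hk'.le⟩ := hξ0
      have hξs' : ξ (s ⟨k, hk'⟩) = zc ⟨k + 1, Nat.lt_succ_of_le hk⟩ := hξs
      have hmargin : ‖ξ 0 - xstar‖ + M * s ⟨k, hk'⟩ < δ₀ := by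
        have h1 : p k + s ⟨k, hk'⟩ = p (k + 1) := (hpsucc k hk').symm
        have h2 : M * p k + M * s ⟨k, hk'⟩ = M * p (k + 1) := by rw [← mul_add, h1]
        have h3 : M * p (k + 1) ≤ M * t := mul_le_mul_of_nonneg_left (hple (k + 1)) hM0
        rw [hξ0']
        have h4 : M * p k + M * s ⟨k, hk'⟩ ≤ M * t := by linarith
        linarith [ihk, hρδ₀, hbase]
      have hcf := confine (f ⟨k, hk'⟩) xstar δ₀ M hM0 (hspeed ⟨k, hk'⟩) ξ v (s ⟨k, hk'⟩)
        (hs _) hsol hmargin (s ⟨k, hk'⟩) ⟨hs _, le_rfl⟩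
      rw [hξs', hξ0'] at hcf
      calc ‖zc ⟨k + 1, Nat.lt_succ_of_le hk⟩ - xstar‖
          ≤ ‖zc ⟨k, Nat.lt_succ_of_le hk'.le⟩ - xstar‖ + M * s ⟨k, hk'⟩ := hcf
        _ ≤ (‖x - xstar‖ + M * p k) + M * s ⟨k, hk'⟩ := by linarith
        _ = ‖x - xstar‖ + M * p (k + 1) := by rw [hpsucc k hk']; ring
  -- per-segment estimates
  have hsegest : ∀ i : Fin m, ∃ u ∈ f i xstar,
      ‖zc i.succ - zc i.castSucc - s i • u‖ ≤ s i * sSup (Si i) := by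
    intro i
    obtain ⟨ξ, v, hξ0, hξs, hint, hξeq, hvmem⟩ := hseg i
    have huIcc : Set.uIcc (0:ℝ) (s i) = Set.Icc 0 (s i) := uIcc_of_le (hs i)
    rw [huIcc] at hξeq
    have hstart : ‖zc i.castSucc - xstar‖ ≤ ‖x - xstar‖ + M * p (i : ℕ) := by
      have := hbnd (i : ℕ) i.isLt.le
      have hcs : (⟨(i : ℕ), Nat.lt_succ_of_le i.isLt.le⟩ : Fin (m + 1)) = i.castSucc :=
        Fin.ext rfl
      rwa [hcs] at this
    have hpfull : p (i : ℕ) + s i ≤ t := by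
      have h1 : p ((i : ℕ) + 1) = p (i : ℕ) + s ⟨(i : ℕ), i.isLt⟩ := hpsucc (i : ℕ) i.isLt
      have h2 : (⟨(i : ℕ), i.isLt⟩ : Fin m) = i := Fin.ext rfl
      rw [h2] at h1
      rw [← h1]
      exact hple _
    have hmargin : ‖ξ 0 - xstar‖ + M * s i < δ₀ := by
      rw [hξ0]
      have h3 : M * (p (i : ℕ) + s i) ≤ M * t := mul_le_mul_of_nonneg_left hpfull hM0
      have h3' : M * p (i : ℕ) + M * s i ≤ M * t := by rw [← mul_add]; exact h3
      linarith [hstart, hρδ₀, hbase]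
    have hcf := confine (f i) xstar δ₀ M hM0 (hspeed i) ξ v (s i) (hs i)
      ⟨hint, by rw [← huIcc] at hξeq; exact hξeq, hvmem⟩ hmargin
    have htraj : ∀ τ ∈ Set.Icc (0:ℝ) (s i), ‖ξ τ - xstar‖ ≤ ρ := by
      intro τ hτ
      have h1 := hcf τ hτ
      have h2 : M * τ ≤ M * s i := mul_le_mul_of_nonneg_left hτ.2 hM0
      have h3 : M * (p (i : ℕ) + s i) ≤ M * t := mul_le_mul_of_nonneg_left hpfull hM0
      have h4 : 0 ≤ M * p (i : ℕ) := mul_nonneg hM0 (hpnn _)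
      have h3' : M * p (i : ℕ) + M * s i ≤ M * t := by rw [← mul_add]; exact h3
      rw [hξ0] at h1
      linarith [hstart, hbase]
    have hvD : ∀ᵐ τ ∂volume, τ ∈ Set.Icc (0:ℝ) (s i) →
        v τ ∈ Metric.cthickening (sSup (Si i)) (f i xstar) := by
      filter_upwards [hvmem] with τ h hτ
      have hvf : v τ ∈ f i (ξ τ) := h (huIcc ▸ hτ)
      have hd : Metric.infDist (v τ) (f i xstar) ≤ sSup (Si i) :=
        le_csSup (hSibdd i) ⟨ξ τ, v τ, htraj τ hτ, hvf, rfl⟩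
      rw [Metric.mem_cthickening_iff]
      have hnetop : Metric.infEDist (v τ) (f i xstar) ≠ ⊤ :=
        Metric.infEdist_ne_top (hf i xstar).1
      rw [← ENNReal.ofReal_toReal hnetop]
      exact ENNReal.ofReal_le_ofReal hd
    obtain ⟨u, hu, hest⟩ := segment_est (f i xstar) (hf i xstar).1 (hf i xstar).2.1
      (hf i xstar).2.2.1 ξ v (s i) (hs i) hint hξeq (sSup (Si i)) (hγi0 i) hvD
    rw [hξs, hξ0] at hest
    exact ⟨u, hu, hest⟩
  choose vv hvv1 hvv2 using hsegest
  -- telescoping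
  set Z : ℕ → EuclideanSpace ℝ (Fin n) :=
    fun k => zc ⟨min k m, Nat.lt_succ_of_le (min_le_right _ _)⟩ with hZ
  have htel : y - x = ∑ i : Fin m, (zc i.succ - zc i.castSucc) := by
    have h1 : ∑ k ∈ Finset.range m, (Z (k + 1) - Z k) = Z m - Z 0 := Finset.sum_range_sub Z m
    have h2 : ∑ i : Fin m, (zc i.succ - zc i.castSucc) =
        ∑ k ∈ Finset.range m, (Z (k + 1) - Z k) := by
      rw [← Fin.sum_univ_eq_sum_range (fun k => Z (k + 1) - Z k) m]
      refine Finset.sum_congr rfl fun i _ => ?_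
      have e1 : Z ((i : ℕ) + 1) = zc i.succ := by
        simp only [hZ]
        exact congrArg zc (Fin.ext (by simp [Nat.min_eq_left (Nat.succ_le_of_lt i.isLt)]))
      have e2 : Z (i : ℕ) = zc i.castSucc := by
        simp only [hZ]
        exact congrArg zc (Fin.ext (by simp [Nat.min_eq_left i.isLt.le]))
      rw [e1, e2]
    have e3 : Z m = y := by
      simp only [hZ]
      rw [← hzlast]
      exact congrArg zc (Fin.ext (by simp [Fin.last]))
    have e4 : Z 0 = x := by
      simp only [hZ]
      rw [← hz0]
      exact congrArg zc (Fin.ext (by simp))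
    rw [h2, h1, e3, e4]
  -- final estimate
  have hmemT : (∑ i, s i • vv i) ∈ {w : EuclideanSpace ℝ (Fin n) |
      ∃ vv' : Fin m → EuclideanSpace ℝ (Fin n),
      (∀ i, vv' i ∈ f i xstar) ∧ w = ∑ i, s i • vv' i} := ⟨vv, hvv1, rfl⟩
  calc Metric.infDist (y - x) {w : EuclideanSpace ℝ (Fin n) |
        ∃ vv' : Fin m → EuclideanSpace ℝ (Fin n),
        (∀ i, vv' i ∈ f i xstar) ∧ w = ∑ i, s i • vv' i}
      ≤ dist (y - x) (∑ i, s i • vv i) := Metric.infDist_le_dist_of_mem hmemT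
    _ = ‖(y - x) - ∑ i, s i • vv i‖ := dist_eq_norm _ _
    _ = ‖∑ i : Fin m, (zc i.succ - zc i.castSucc - s i • vv i)‖ := by
        rw [htel, ← Finset.sum_sub_distrib]
    _ ≤ ∑ i : Fin m, ‖zc i.succ - zc i.castSucc - s i • vv i‖ := norm_sum_le _ _
    _ ≤ ∑ i : Fin m, s i * sSup (Si i) := Finset.sum_le_sum fun i _ => hvv2 i
    _ ≤ ∑ i : Fin m, t * sSup (Si i) := Finset.sum_le_sum fun i _ =>
        mul_le_mul_of_nonneg_right (ht ▸ Finset.single_le_sum (fun j _ => hs j)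
          (Finset.mem_univ i)) (hγi0 i)
    _ = t * γ ρ := by rw [hγ ρ, Finset.mul_sum]
end

section
/- Let n be a unit vector in ℝⁿ, 0 < θ' < θ ≤ π, and suppose x, ξ̄ ∈ ℝⁿ are such that (x − ξ̄)·w ≤ 0 for all w in the closure of C_θ(n). Then for every v ∈ C_{θ'}(n), the unit vector (x − ξ̄)/|x − ξ̄| satisfies ((x−ξ̄)/|x−ξ̄|) · v ≤ − sin((θ − θ')/2) |v|. -/
open Metric Set
open scoped RealInnerProductSpace

lemma alg_step (c t S C : ℝ) (ht : 0 ≤ t) (ht2 : t ^ 2 = 1 - c ^ 2) (hS : 0 ≤ S)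
    (hC : 0 < C) (hsc : S ^ 2 + C ^ 2 = 1) (h : c * C + t * S ≤ 0) : c ≤ -S := by
  have hc0 : c ≤ 0 := by nlinarith [mul_nonneg ht hS]
  nlinarith [sq_nonneg (c * C + t * S), mul_nonneg ht hS, sq_nonneg (c + S),
    mul_nonneg (mul_nonneg ht hS) hC.le]

set_option maxHeartbeats 1000000 in
lemma key_ineq {n : ℕ} (θ θ' : ℝ) (hθ'pos : 0 < θ') (hθθ : θ' < θ) (hθpi : θ ≤ Real.pi)
    (nvec u vh : EuclideanSpace ℝ (Fin n))
    (hn : ‖nvec‖ = 1) (hu : ‖u‖ = 1) (hvh : ‖vh‖ = 1)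
    (hvn : ⟪vh, nvec⟫ > Real.cos (θ' / 2))
    (hyp : ∀ w : EuclideanSpace ℝ (Fin n),
      ⟪w, nvec⟫ > ‖w‖ * Real.cos (θ / 2) → ⟪u, w⟫ ≤ 0) :
    ⟪u, vh⟫ ≤ -Real.sin ((θ - θ') / 2) := by
  have hπ := Real.pi_pos
  set s := (θ - θ') / 2 with hs_def
  have hs0 : 0 < s := by simp only [hs_def]; linarith
  have hsπ : s < Real.pi / 2 := by simp only [hs_def]; linarith
  have hcos_s : 0 < Real.cos s := Real.cos_pos_of_mem_Ioo ⟨by linarith, hsπ⟩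
  have hsin_s : 0 ≤ Real.sin s := Real.sin_nonneg_of_nonneg_of_le_pi hs0.le (by linarith)
  have hsin1 : Real.sin s ≤ 1 := Real.sin_le_one s
  have hcos_half : Real.cos (θ / 2) ≤ Real.cos (θ' / 2) :=
    Real.cos_le_cos_of_nonneg_of_le_pi (by linarith) (by linarith) (by linarith)
  have hcos_θ'pos : 0 ≤ Real.cos (θ' / 2) :=
    Real.cos_nonneg_of_mem_Icc ⟨by linarith, by linarith⟩
  have hsin_θ' : 0 ≤ Real.sin (θ' / 2) :=
    Real.sin_nonneg_of_nonneg_of_le_pi (by linarith) (by linarith)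
  set a : ℝ := ⟪vh, nvec⟫ with ha_def
  have ha1 : a ≤ 1 := by
    have := real_inner_le_norm vh nvec
    rwa [hn, hvh, one_mul] at this
  have ha0 : 0 < a := lt_of_le_of_lt hcos_θ'pos hvn
  set c : ℝ := ⟪u, vh⟫ with hc_def
  by_cases hdeg : u - c • vh = 0
  · -- u = c • vh with |c| = 1; also c ≤ 0, so c = -1
    have huv : u = c • vh := by rwa [sub_eq_zero] at hdeg
    have hc2 : c ^ 2 = 1 := by
      have : ‖u‖ = |c| * ‖vh‖ := by rw [huv, norm_smul, Real.norm_eq_abs]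
      rw [hu, hvh, mul_one] at this
      nlinarith [sq_abs c, this]
    have hcle : c ≤ 0 :=
      hyp vh (by rw [hvh, one_mul]; exact lt_of_le_of_lt hcos_half hvn)
    have hc1 : c = -1 := by nlinarith
    rw [hc1]; linarith
  · set u' := u - c • vh with hu'_def
    have hu'norm : (0:ℝ) < ‖u'‖ := norm_pos_iff.mpr hdeg
    set t : ℝ := ‖u'‖ with ht_def
    have hinner_u'u' : ⟪u', u'⟫ = 1 - c ^ 2 := by
      rw [hu'_def]
      simp only [inner_sub_left, inner_sub_right, real_inner_smul_left, real_inner_smul_right]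
      simp only [real_inner_self_eq_norm_sq, hu, hvh]
      have hX : ⟪vh, u⟫ = c := real_inner_comm u vh
      rw [hX]; ring
    have ht2 : t ^ 2 = 1 - c ^ 2 := by
      rw [ht_def, ← real_inner_self_eq_norm_sq]; exact hinner_u'u'
    set p := t⁻¹ • u' with hp_def
    have hpvh : ⟪p, vh⟫ = 0 := by
      rw [hp_def, real_inner_smul_left, hu'_def]
      simp only [inner_sub_left, real_inner_smul_left]
      simp only [real_inner_self_eq_norm_sq, hvh]
      rw [← hc_def]
      ring
    have hpnorm : ‖p‖ = 1 := by
      rw [hp_def, norm_smul, Real.norm_eq_abs, abs_inv, abs_of_pos hu'norm, ← ht_def]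
      field_simp
    have hup : ⟪u, p⟫ = t := by
      rw [hp_def, real_inner_smul_right]
      have h1 : ⟪u, u'⟫ = 1 - c ^ 2 := by
        rw [hu'_def]
        simp only [inner_sub_right, real_inner_smul_right]
        simp only [real_inner_self_eq_norm_sq, hu]
        rw [← hc_def]; ring
      rw [h1, ← ht2]
      field_simp
    set b : ℝ := Real.sqrt (1 - a ^ 2) with hb_def
    have hb0 : 0 ≤ b := Real.sqrt_nonneg _
    have hmnorm : ‖nvec - a • vh‖ = b := by
      have h2 : ‖nvec - a • vh‖ ^ 2 = 1 - a ^ 2 := by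
        rw [← real_inner_self_eq_norm_sq]
        simp only [inner_sub_left, inner_sub_right, real_inner_smul_left, real_inner_smul_right]
        simp only [real_inner_self_eq_norm_sq, hn, hvh]
        have hY : ⟪nvec, vh⟫ = a := real_inner_comm vh nvec
        rw [hY]; ring
      rw [hb_def, ← h2, Real.sqrt_sq (norm_nonneg _)]
    have hpn : ⟪p, nvec⟫ ≥ -b := by
      have heq : ⟪p, nvec⟫ = ⟪p, nvec - a • vh⟫ := by
        rw [inner_sub_right, real_inner_smul_right, hpvh]; ring
      have hcs := abs_real_inner_le_norm p (nvec - a • vh)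
      rw [hpnorm, one_mul, hmnorm] at hcs
      rw [heq]
      linarith [neg_abs_le (⟪p, nvec - a • vh⟫ : ℝ)]
    have hb2 : b ^ 2 = 1 - a ^ 2 := Real.sq_sqrt (by nlinarith)
    have hbsin : b < Real.sin (θ' / 2) := by
      have hsc : Real.sin (θ' / 2) ^ 2 + Real.cos (θ' / 2) ^ 2 = 1 := Real.sin_sq_add_cos_sq _
      nlinarith
    set w := Real.cos s • vh + Real.sin s • p with hw_def
    have hwnorm : ‖w‖ = 1 := by
      have h2 : ‖w‖ ^ 2 = 1 := by
        rw [← real_inner_self_eq_norm_sq, hw_def]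
        simp only [inner_add_left, inner_add_right, real_inner_smul_left, real_inner_smul_right]
        simp only [real_inner_self_eq_norm_sq, hvh, hpnorm]
        rw [real_inner_comm p vh, hpvh]
        have := Real.sin_sq_add_cos_sq s
        nlinarith
      nlinarith [norm_nonneg w]
    have hwn : ⟪w, nvec⟫ > ‖w‖ * Real.cos (θ / 2) := by
      rw [hwnorm, one_mul]
      have hcθ : Real.cos (θ / 2)
          = Real.cos (θ' / 2) * Real.cos s - Real.sin (θ' / 2) * Real.sin s := by
        rw [← Real.cos_add]
        congr 1
        simp only [hs_def]; ring
      have hwinner : ⟪w, nvec⟫ = Real.cos s * a + Real.sin s * ⟪p, nvec⟫ := by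
        rw [hw_def]
        simp only [inner_add_left, real_inner_smul_left]
        rw [← ha_def]
      rw [hwinner, hcθ]
      nlinarith [hpn, hbsin, hvn, hcos_s, hsin_s]
    have hkey := hyp w hwn
    have hexp : ⟪u, w⟫ = c * Real.cos s + t * Real.sin s := by
      rw [hw_def]
      simp only [inner_add_right, real_inner_smul_right]
      rw [← hc_def, hup]
      ring
    rw [hexp] at hkey
    exact alg_step c t (Real.sin s) (Real.cos s) hu'norm.le ht2 hsin_s hcos_s
      (Real.sin_sq_add_cos_sq s) hkey
/-- if x − ξ̄ makes a nonpositive inner product with every vector of the closed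
cone of opening θ and axis n, then its normalization makes an inner product
≤ −sin((θ−θ')/2)|v| with every v in the open cone of opening θ' < θ. -/
theorem stmt_4 {n : ℕ} (θ θ' : ℝ) (hθ'pos : 0 < θ') (hθθ : θ' < θ) (hθpi : θ ≤ Real.pi)
    (nvec x ξbar : EuclideanSpace ℝ (Fin n)) (hn : ‖nvec‖ = 1) (hne : x ≠ ξbar)
    (hyp : ∀ w ∈ closure {h : EuclideanSpace ℝ (Fin n) | ⟪h, nvec⟫ > ‖h‖ * Real.cos (θ / 2)},
      ⟪x - ξbar, w⟫ ≤ 0) :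
    ∀ v ∈ {h : EuclideanSpace ℝ (Fin n) | ⟪h, nvec⟫ > ‖h‖ * Real.cos (θ' / 2)},
      ⟪‖x - ξbar‖⁻¹ • (x - ξbar), v⟫ ≤ -Real.sin ((θ - θ') / 2) * ‖v‖ := by
  intro v hv
  have hv' : ⟪v, nvec⟫ > ‖v‖ * Real.cos (θ' / 2) := hv
  have hd : x - ξbar ≠ 0 := sub_ne_zero.mpr hne
  have hdn : (0:ℝ) < ‖x - ξbar‖ := norm_pos_iff.mpr hd
  have hv0 : v ≠ 0 := by
    rintro rfl
    simp at hv'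
  have hvnorm : (0:ℝ) < ‖v‖ := norm_pos_iff.mpr hv0
  set u := ‖x - ξbar‖⁻¹ • (x - ξbar) with hu_def
  have hu : ‖u‖ = 1 := by
    rw [hu_def, norm_smul, Real.norm_eq_abs, abs_inv, abs_of_pos hdn]
    field_simp
  set vh := ‖v‖⁻¹ • v with hvh_def
  have hvh : ‖vh‖ = 1 := by
    rw [hvh_def, norm_smul, Real.norm_eq_abs, abs_inv, abs_of_pos hvnorm]
    field_simp
  have hvhn : ⟪vh, nvec⟫ > Real.cos (θ' / 2) := by
    rw [hvh_def, real_inner_smul_left]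
    have h := mul_lt_mul_of_pos_left hv' (inv_pos.mpr hvnorm)
    rw [← mul_assoc, inv_mul_cancel₀ hvnorm.ne', one_mul] at h
    exact h
  have hypu : ∀ w : EuclideanSpace ℝ (Fin n),
      ⟪w, nvec⟫ > ‖w‖ * Real.cos (θ / 2) → ⟪u, w⟫ ≤ 0 := by
    intro w hw
    have hw0 := hyp w (subset_closure hw)
    rw [hu_def, real_inner_smul_left]
    exact mul_nonpos_of_nonneg_of_nonpos (inv_nonneg.mpr hdn.le) hw0
  have hkey := key_ineq θ θ' hθ'pos hθθ hθpi nvec u vh hn hu hvh hvhn hypu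
  have hexp : ⟪u, v⟫ = ‖v‖ * ⟪u, vh⟫ := by
    rw [hvh_def, real_inner_smul_right, ← mul_assoc, mul_inv_cancel₀ hvnorm.ne', one_mul]
  rw [hexp]
  calc ‖v‖ * ⟪u, vh⟫ ≤ ‖v‖ * (-Real.sin ((θ - θ') / 2)) :=
        mul_le_mul_of_nonneg_left hkey hvnorm.le
    _ = -Real.sin ((θ - θ') / 2) * ‖v‖ := by ring
end

section
/- Let 𝒯 ⊂ ℝⁿ be closed and let ℱ be a family of vector fields on ℝⁿ that is uniformly locally Lipschitz and uniformly linearly bounded (|f(x)| ≤ C(|x|+1) for all f ∈ ℱ). Let T be the minimum time function to reach 𝒯 by concatenations of integral curves of fields in ℱ, and ℛ = { x : T(x) < ∞ }. Suppose there is a modulus ω and for each x₀ ∈ ∂𝒯 a neighborhood W and constant C₀ with T(z) ≤ C₀ ω(d(z, 𝒯)) for all z ∈ W. Then ℛ is open, and for every bounded V with closure contained in ℛ there exist constants C, C₁ ≥ 0 and β > 0 such that |T(z₁) − T(z₂)| ≤ C ω(C₁ |z₁ − z₂|) for all z₁, z₂ ∈ V with |z₁ − z₂| ≤ β. -/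
open Metric Set Filter
open scoped ENNReal Topology

/-- Reachability relation for a family `F` of vector fields: `Reach F x t z` holds iff there
is a concatenation of integral curves of fields in `F`, of total duration `t ≥ 0`,
going from `x` to `z`. -/
inductive Reach {n : ℕ} (F : Set (EuclideanSpace ℝ (Fin n) → EuclideanSpace ℝ (Fin n))) :
    EuclideanSpace ℝ (Fin n) → ℝ → EuclideanSpace ℝ (Fin n) → Prop
  | refl (x : EuclideanSpace ℝ (Fin n)) : Reach F x 0 x
  | step {x z w : EuclideanSpace ℝ (Fin n)} {t s : ℝ} (h : Reach F x t z)
      {f : EuclideanSpace ℝ (Fin n) → EuclideanSpace ℝ (Fin n)} (hf : f ∈ F) (hs : 0 ≤ s)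
      (y : ℝ → EuclideanSpace ℝ (Fin n)) (h0 : y 0 = z)
      (hy : ∀ u ∈ Set.Icc (0 : ℝ) s, HasDerivAt y (f (y u)) u)
      (hw : y s = w) : Reach F x (t + s) w

/-- The minimum time function to reach the target `T` by `F`-trajectories (`+∞` if
the target cannot be reached). -/
noncomputable def minTime {n : ℕ}
    (F : Set (EuclideanSpace ℝ (Fin n) → EuclideanSpace ℝ (Fin n)))
    (T : Set (EuclideanSpace ℝ (Fin n))) (x : EuclideanSpace ℝ (Fin n)) : ℝ≥0∞ :=
  sInf (ENNReal.ofReal '' {r : ℝ | 0 ≤ r ∧ ∃ z ∈ T, Reach F x r z})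

/-- A modulus: nonnegative, nondecreasing, with ω(0+) = 0. -/
def IsModulus (ω : ℝ → ℝ) : Prop :=
  (∀ r, 0 ≤ ω r) ∧ Monotone ω ∧ Tendsto ω (𝓝[>] (0 : ℝ)) (𝓝 0)

/-- Uniform local Lipschitz continuity of a family of vector fields. -/
def UnifLocLipschitz {n : ℕ}
    (F : Set (EuclideanSpace ℝ (Fin n) → EuclideanSpace ℝ (Fin n))) : Prop :=
  ∀ K : Set (EuclideanSpace ℝ (Fin n)), Bornology.IsBounded K →
    ∃ L : NNReal, ∀ f ∈ F, LipschitzOnWith L f K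

/-- Uniform linear growth bound for a family of vector fields. -/
def UnifLinBounded {n : ℕ}
    (F : Set (EuclideanSpace ℝ (Fin n) → EuclideanSpace ℝ (Fin n))) : Prop :=
  ∃ C : ℝ, 0 ≤ C ∧ ∀ f ∈ F, ∀ x, ‖f x‖ ≤ C * (‖x‖ + 1)


section AuxiliaryLemmas

open Real
open scoped NNReal

variable {n : ℕ} {F : Set (EuclideanSpace ℝ (Fin n) → EuclideanSpace ℝ (Fin n))}

local notation "E" => EuclideanSpace ℝ (Fin n)

theorem Reach.nonneg {x z : E} {t : ℝ} (h : Reach F x t z) : 0 ≤ t := by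
  induction h with
  | refl => exact le_refl 0
  | step h hf hs y h0 hy hw ih => exact add_nonneg ih hs

theorem Reach.trans {x z w : E} {t s : ℝ} (h₁ : Reach F x t z) (h₂ : Reach F z s w) :
    Reach F x (t + s) w := by
  induction h₂ with
  | refl => simpa using h₁
  | step h hf hs y h0 hy hw ih =>
      have := Reach.step ih hf hs y h0 hy hw
      rwa [add_assoc] at this

/-- Gronwall norm bound for a single integral curve. -/
theorem piece_norm {f : E → E} {C : ℝ} (hC : 1 ≤ C) (hlin : ∀ x, ‖f x‖ ≤ C * (‖x‖ + 1))
    {s : ℝ} (hs : 0 ≤ s) {y : ℝ → E} (hy : ∀ u ∈ Set.Icc (0 : ℝ) s, HasDerivAt y (f (y u)) u) :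
    ∀ u ∈ Set.Icc (0 : ℝ) s, ‖y u‖ + 1 ≤ (‖y 0‖ + 1) * exp (C * u) := by
  intro u hu
  have hcont : ContinuousOn y (Set.Icc 0 s) := fun v hv =>
    (hy v hv).continuousAt.continuousWithinAt
  have hder : ∀ v ∈ Set.Ico (0 : ℝ) s, HasDerivWithinAt y (f (y v)) (Set.Ici v) v :=
    fun v hv => ((hy v (Set.mem_Icc_of_Ico hv)).hasDerivWithinAt)
  have hbd : ∀ v ∈ Set.Ico (0 : ℝ) s, ‖f (y v)‖ ≤ C * ‖y v‖ + C := by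
    intro v hv
    calc ‖f (y v)‖ ≤ C * (‖y v‖ + 1) := hlin _
    _ = C * ‖y v‖ + C := by ring
  have := norm_le_gronwallBound_of_norm_deriv_right_le hcont hder le_rfl hbd u hu
  rw [gronwallBound_of_K_ne_0 (by linarith)] at this
  have hCC : C / C = 1 := div_self (by linarith)
  have h2 : ‖y u‖ ≤ ‖y 0‖ * exp (C * u) + 1 * (exp (C * u) - 1) := by
    simpa [hCC] using this
  nlinarith [h2]


/-- Existence of a local solution through `x'` with full derivatives on `[0, t₁]`. -/
theorem exists_sol {f : E → E} {x' : E} (L : ℝ≥0)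
    (hfL : LipschitzOnWith L f (closedBall x' 2)) {M : ℝ}
    (hM : ∀ x ∈ closedBall x' 2, ‖f x‖ ≤ M) {t₁ ε' : ℝ} (ht₁ : 0 ≤ t₁) (hε' : 0 < ε')
    (hmul : M * (t₁ + ε') ≤ 2) :
    ∃ z : ℝ → E, z 0 = x' ∧ (∀ u ∈ Set.Icc (0:ℝ) t₁, HasDerivAt z (f (z u)) u) := by
  have hM0 : 0 ≤ M := (norm_nonneg _).trans (hM x' (mem_closedBall_self (by norm_num)))
  have hpl : IsPicardLindelof (fun _ : ℝ => f) (tmin := -ε') (tmax := t₁ + ε')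
      ⟨0, by constructor <;> linarith⟩ x' 2 0 M.toNNReal L := by
    apply IsPicardLindelof.of_time_independent
    · intro x hx
      rw [Real.coe_toNNReal _ hM0]
      exact hM x (by simpa using hx)
    · simpa using hfL
    · have : max (t₁ + ε' - 0) (0 - -ε') = t₁ + ε' := by
        rw [max_eq_left] <;> linarith
      show (M.toNNReal : ℝ) * max (t₁ + ε' - 0) (0 - -ε') ≤ ((2 : ℝ≥0) : ℝ) - ((0 : ℝ≥0) : ℝ)
      rw [this, Real.coe_toNNReal _ hM0]
      norm_num
      exact hmul
  obtain ⟨z, hz0, hz⟩ := hpl.exists_eq_forall_mem_Icc_hasDerivWithinAt₀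
  have hsub : Set.Icc (0:ℝ) t₁ ⊆ Set.Icc (-ε') (t₁ + ε') :=
    Set.Icc_subset_Icc (by linarith) (by linarith)
  refine ⟨z, hz0, fun u hu => ?_⟩
  exact (hz u (hsub hu)).hasDerivAt (Icc_mem_nhds (by linarith [hu.1]) (by linarith [hu.2]))

noncomputable def stepSize (C B : ℝ) : ℝ :=
  min (1 / (C * (B + 4))) (Real.log (1 + 1 / (B + 2)) / C)

theorem stepSize_pos {C B : ℝ} (hC : 1 ≤ C) (hB : 0 ≤ B) : 0 < stepSize C B := by
  apply lt_min
  · positivity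
  · apply div_pos _ (by linarith)
    apply Real.log_pos
    have : 0 < 1 / (B + 2) := by positivity
    linarith

theorem piece {C : ℝ} (hC : 1 ≤ C) (hlinF : ∀ f ∈ F, ∀ x, ‖f x‖ ≤ C * (‖x‖ + 1))
    {B : ℝ} (hB : 0 ≤ B) {L : ℝ≥0}
    (hL : ∀ f ∈ F, LipschitzOnWith L f (closedBall (0:E) (B + 3))) :
    ∀ (k : ℕ) (s : ℝ), 0 ≤ s → s ≤ k * stepSize C B →
      ∀ f ∈ F, ∀ y : ℝ → E, (∀ u ∈ Set.Icc (0:ℝ) s, HasDerivAt y (f (y u)) u) →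
      (∀ u ∈ Set.Icc (0:ℝ) s, ‖y u‖ ≤ B) →
      ∀ x' : E, ‖x' - y 0‖ ≤ exp (-((L:ℝ) * s)) →
      ∃ w', Reach F x' s w' ∧ ‖w' - y s‖ ≤ ‖x' - y 0‖ * exp ((L:ℝ) * s) := by
  intro k
  induction k with
  | zero =>
      intro s hs hsk f hf y hy hyB x' hx'
      have hs0 : s = 0 := le_antisymm (by simpa using hsk) hs
      subst hs0
      exact ⟨x', Reach.refl x', by simpa using hx'⟩
  | succ k ih =>
      intro s hs hsk f hf y hy hyB x' hx'
      have hε₀ : 0 < stepSize C B := stepSize_pos hC hB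
      set ε₀ := stepSize C B with hε₀def
      set t₁ := min s ε₀ with ht₁def
      have ht₁0 : 0 ≤ t₁ := le_min hs hε₀.le
      have ht₁s : t₁ ≤ s := min_le_left _ _
      have ht₁ε : t₁ ≤ ε₀ := min_le_right _ _
      have hLs : exp (-((L:ℝ) * s)) ≤ 1 := by
        rw [← Real.exp_zero]
        apply Real.exp_le_exp.mpr
        have : 0 ≤ (L:ℝ) * s := mul_nonneg L.coe_nonneg hs
        linarith
      have hx'B : ‖x'‖ ≤ B + 1 := by
        have h1 : ‖x'‖ ≤ ‖x' - y 0‖ + ‖y 0‖ := by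
          simpa using norm_add_le (x' - y 0) (y 0)
        have h2 : ‖y 0‖ ≤ B := hyB 0 ⟨le_refl _, hs⟩
        linarith [hx'.trans hLs]
      set M := C * (B + 4) with hMdef
      have hMpos : 0 < M := by positivity
      have hM : ∀ x ∈ closedBall x' 2, ‖f x‖ ≤ M := by
        intro x hx
        have : ‖x‖ ≤ ‖x'‖ + 2 := by
          have := mem_closedBall_iff_norm.mp hx
          have h3 : ‖x‖ ≤ ‖x - x'‖ + ‖x'‖ := by simpa using norm_add_le (x - x') x'
          linarith
        calc ‖f x‖ ≤ C * (‖x‖ + 1) := hlinF f hf x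
        _ ≤ C * (B + 4) := by nlinarith
      have hball : closedBall x' 2 ⊆ closedBall (0:E) (B + 3) := by
        apply closedBall_subset_closedBall'
        rw [dist_zero_right]
        linarith
      have hMε : M * ε₀ ≤ 1 := by
        have h1 : ε₀ ≤ 1 / M := min_le_left _ _
        calc M * ε₀ ≤ M * (1 / M) := by nlinarith
        _ = 1 := by field_simp
      have hmul : M * (t₁ + ε₀) ≤ 2 := by nlinarith
      obtain ⟨z, hz0, hz⟩ := exists_sol L ((hL f hf).mono hball) hM ht₁0 hε₀ hmul
      -- bound on the new solution
      have hz_ball : ∀ u ∈ Set.Icc (0:ℝ) t₁, ‖z u‖ ≤ B + 2 := by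
        intro u hu
        have hcont : ContinuousOn (fun v => z v - x') (Set.Icc 0 t₁) := fun v hv =>
          ((hz v hv).continuousAt.continuousWithinAt).sub continuousWithinAt_const
        have hder : ∀ v ∈ Set.Ico (0:ℝ) t₁,
            HasDerivWithinAt (fun v => z v - x') (f (z v)) (Set.Ici v) v := fun v hv =>
          (((hz v (Set.mem_Icc_of_Ico hv)).sub_const x')).hasDerivWithinAt
        have hbd : ∀ v ∈ Set.Ico (0:ℝ) t₁,
            ‖f (z v)‖ ≤ C * ‖z v - x'‖ + C * (‖x'‖ + 1) := by
          intro v hv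
          have h3 : ‖z v‖ ≤ ‖z v - x'‖ + ‖x'‖ := by simpa using norm_add_le (z v - x') x'
          calc ‖f (z v)‖ ≤ C * (‖z v‖ + 1) := hlinF f hf _
          _ ≤ C * ‖z v - x'‖ + C * (‖x'‖ + 1) := by nlinarith
        have ha : ‖(fun v => z v - x') 0‖ ≤ 0 := by simp [hz0]
        have := norm_le_gronwallBound_of_norm_deriv_right_le hcont hder ha hbd u hu
        rw [gronwallBound_of_K_ne_0 (by linarith : C ≠ 0)] at this
        have hgb : ‖z u - x'‖ ≤ (‖x'‖ + 1) * (exp (C * u) - 1) := by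
          have hd : C * (‖x'‖ + 1) / C = ‖x'‖ + 1 := by field_simp
          calc ‖z u - x'‖ ≤ 0 * exp (C * (u - 0)) +
              C * (‖x'‖ + 1) / C * (exp (C * (u - 0)) - 1) := this
          _ = (‖x'‖ + 1) * (exp (C * u) - 1) := by rw [hd]; ring_nf
        have hexp : exp (C * u) ≤ 1 + 1 / (B + 2) := by
          have h1 : ε₀ ≤ Real.log (1 + 1 / (B + 2)) / C := min_le_right _ _
          have h2 : C * u ≤ Real.log (1 + 1 / (B + 2)) := by
            rw [le_div_iff₀ (by linarith : (0:ℝ) < C)] at h1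
            have hu2 : u ≤ ε₀ := le_trans hu.2 ht₁ε
            nlinarith [mul_le_mul_of_nonneg_left hu2 (by linarith : (0:ℝ) ≤ C)]
          calc exp (C * u) ≤ exp (Real.log (1 + 1 / (B + 2))) := Real.exp_le_exp.mpr h2
          _ = 1 + 1 / (B + 2) := Real.exp_log (by positivity)
        have hfin : ‖z u - x'‖ ≤ 1 := by
          have hb2 : (0:ℝ) < B + 2 := by linarith
          have h4 : (‖x'‖ + 1) * (exp (C * u) - 1) ≤ (B + 2) * (1 / (B + 2)) := by
            have he1 : (1:ℝ) ≤ exp (C * u) := by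
              rw [← Real.exp_zero]
              exact Real.exp_le_exp.mpr (mul_nonneg (by linarith) hu.1)
            nlinarith
          rw [mul_one_div, div_self (by linarith)] at h4
          linarith
        have h5 : ‖z u‖ ≤ ‖z u - x'‖ + ‖x'‖ := by simpa using norm_add_le (z u - x') x'
        linarith
      -- Gronwall comparison of z and y on [0, t₁]
      have hIccsub : Set.Icc (0:ℝ) t₁ ⊆ Set.Icc (0:ℝ) s := Set.Icc_subset_Icc le_rfl ht₁s
      have hcmp : dist (z t₁) (y t₁) ≤ ‖x' - y 0‖ * exp ((L:ℝ) * t₁) := by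
        have := dist_le_of_trajectories_ODE_of_mem
          (v := fun _ : ℝ => f) (s := fun _ : ℝ => closedBall (0:E) (B + 3)) (K := L)
          (fun _ _ => hL f hf)
          (fun v hv => (hz v hv).continuousAt.continuousWithinAt)
          (fun v hv => (hz v (Set.mem_Icc_of_Ico hv)).hasDerivWithinAt)
          (fun v hv => by
            rw [mem_closedBall_zero_iff]
            linarith [hz_ball v (Set.mem_Icc_of_Ico hv)])
          (fun v hv => (hy v (hIccsub hv)).continuousAt.continuousWithinAt)
          (fun v hv => (hy v (hIccsub (Set.mem_Icc_of_Ico hv))).hasDerivWithinAt)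
          (fun v hv => by
            rw [mem_closedBall_zero_iff]
            linarith [hyB v (hIccsub (Set.mem_Icc_of_Ico hv))])
          (by rw [hz0, dist_eq_norm])
          t₁ ⟨ht₁0, le_refl _⟩
        simpa using this
      -- recursive call on the time-shifted curve
      set s₂ := s - t₁ with hs₂def
      have hs₂0 : 0 ≤ s₂ := by simp [hs₂def]; linarith
      have hs₂k : s₂ ≤ k * ε₀ := by
        rcases le_total s ε₀ with h | h
        · have : t₁ = s := min_eq_left h
          rw [hs₂def, this]
          simp
          positivity
        · have : t₁ = ε₀ := min_eq_right h
          rw [hs₂def, this]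
          have : (k + 1 : ℕ) * ε₀ = k * ε₀ + ε₀ := by push_cast; ring
          rw [this] at hsk
          linarith
      have hy₂ : ∀ u ∈ Set.Icc (0:ℝ) s₂,
          HasDerivAt (fun u => y (u + t₁)) (f (y (u + t₁))) u := by
        intro u hu
        exact (hy (u + t₁) ⟨by linarith [hu.1], by linarith [hu.2]⟩).comp_add_const u t₁
      have hy₂B : ∀ u ∈ Set.Icc (0:ℝ) s₂, ‖y (u + t₁)‖ ≤ B := fun u hu =>
        hyB (u + t₁) ⟨by linarith [hu.1], by linarith [hu.2]⟩
      have hstart : ‖z t₁ - (fun u => y (u + t₁)) 0‖ ≤ exp (-((L:ℝ) * s₂)) := by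
        simp only [zero_add]
        rw [← dist_eq_norm]
        calc dist (z t₁) (y t₁) ≤ ‖x' - y 0‖ * exp ((L:ℝ) * t₁) := hcmp
        _ ≤ exp (-((L:ℝ) * s)) * exp ((L:ℝ) * t₁) := by
            apply mul_le_mul_of_nonneg_right hx' (Real.exp_nonneg _)
        _ = exp (-((L:ℝ) * s₂)) := by
            rw [← Real.exp_add]; congr 1; rw [hs₂def]; ring
      obtain ⟨w', hw'reach, hw'bd⟩ := ih s₂ hs₂0 hs₂k f hf (fun u => y (u + t₁)) hy₂ hy₂B
        (z t₁) hstart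
      have hreach1 : Reach F x' t₁ (z t₁) := by
        have := Reach.step (Reach.refl x') hf ht₁0 z hz0 hz rfl
        simpa using this
      have hreach : Reach F x' s w' := by
        have := hreach1.trans hw'reach
        have hts : t₁ + s₂ = s := by rw [hs₂def]; ring
        rwa [hts] at this
      refine ⟨w', hreach, ?_⟩
      have hA : s₂ + t₁ = s := by rw [hs₂def]; ring
      rw [hA, zero_add] at hw'bd
      calc ‖w' - y s‖ ≤ ‖z t₁ - y t₁‖ * exp ((L:ℝ) * s₂) := hw'bd
      _ ≤ (‖x' - y 0‖ * exp ((L:ℝ) * t₁)) * exp ((L:ℝ) * s₂) := by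
          apply mul_le_mul_of_nonneg_right _ (Real.exp_nonneg _)
          rw [← dist_eq_norm]; exact hcmp
      _ = ‖x' - y 0‖ * exp ((L:ℝ) * s) := by
          rw [mul_assoc, ← Real.exp_add]
          congr 2
          rw [hs₂def]; ring

theorem reach_norm {C : ℝ} (hC : 1 ≤ C) (hlinF : ∀ f ∈ F, ∀ x, ‖f x‖ ≤ C * (‖x‖ + 1))
    {x z : E} {t : ℝ} (h : Reach F x t z) : ‖z‖ + 1 ≤ (‖x‖ + 1) * exp (C * t) := by
  induction h with
  | refl => simp
  | @step z w t s h f hf hs y h0 hy hw ih =>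
      have h1 := piece_norm hC (hlinF _ hf) hs hy s ⟨hs, le_refl _⟩
      rw [h0, hw] at h1
      have h2 : (‖z‖ + 1) * exp (C * s) ≤ ((‖x‖ + 1) * exp (C * t)) * exp (C * s) :=
        mul_le_mul_of_nonneg_right ih (Real.exp_nonneg _)
      calc ‖w‖ + 1 ≤ (‖z‖ + 1) * exp (C * s) := h1
      _ ≤ ((‖x‖ + 1) * exp (C * t)) * exp (C * s) := h2
      _ = (‖x‖ + 1) * exp (C * (t + s)) := by rw [mul_assoc, ← Real.exp_add]; ring_nf

theorem replay {C : ℝ} (hC : 1 ≤ C) (hlinF : ∀ f ∈ F, ∀ x, ‖f x‖ ≤ C * (‖x‖ + 1))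
    {B : ℝ} (hB : 0 ≤ B) {L : ℝ≥0}
    (hL : ∀ f ∈ F, LipschitzOnWith L f (closedBall (0:E) (B + 3)))
    {x z : E} {t : ℝ} (h : Reach F x t z) (hxt : (‖x‖ + 1) * exp (C * t) ≤ B) :
    ∀ x' : E, ‖x' - x‖ ≤ exp (-((L:ℝ) * t)) →
      ∃ z', Reach F x' t z' ∧ ‖z' - z‖ ≤ ‖x' - x‖ * exp ((L:ℝ) * t) := by
  induction h with
  | refl =>
      intro x' hx'
      exact ⟨x', Reach.refl _, by simp⟩
  | @step z w t s h f hf hs y h0 hy hw ih =>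
      intro x' hx'
      have ht : 0 ≤ t := h.nonneg
      have hexp1 : exp (C * t) ≤ exp (C * (t + s)) := by
        apply Real.exp_le_exp.mpr; nlinarith
      have hxt' : (‖x‖ + 1) * exp (C * t) ≤ B := by
        have : (‖x‖ + 1) * exp (C * t) ≤ (‖x‖ + 1) * exp (C * (t + s)) := by
          apply mul_le_mul_of_nonneg_left hexp1 (by positivity)
        linarith
      have hx'2 : ‖x' - x‖ ≤ exp (-((L:ℝ) * t)) := by
        refine hx'.trans (Real.exp_le_exp.mpr ?_)
        have : 0 ≤ (L:ℝ) * s := mul_nonneg L.coe_nonneg hs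
        nlinarith [L.coe_nonneg]
      obtain ⟨z'', hz''reach, hz''⟩ := ih hxt' x' hx'2
      -- bound on the intermediate trajectory
      have hzn : ‖z‖ + 1 ≤ (‖x‖ + 1) * exp (C * t) := reach_norm hC hlinF h
      have hyB : ∀ u ∈ Set.Icc (0:ℝ) s, ‖y u‖ ≤ B := by
        intro u hu
        have h1 := piece_norm hC (hlinF _ hf) hs hy u hu
        rw [h0] at h1
        have h2 : exp (C * u) ≤ exp (C * s) :=
          Real.exp_le_exp.mpr (by nlinarith [hu.2])
        have h3 : (‖z‖ + 1) * exp (C * u) ≤ ((‖x‖ + 1) * exp (C * t)) * exp (C * s) := by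
          have e1 : 0 < exp (C * u) := Real.exp_pos _
          have e2 : 0 ≤ ‖z‖ + 1 := by positivity
          nlinarith [Real.exp_pos (C * s), Real.exp_pos (C * u)]
        have h4 : ((‖x‖ + 1) * exp (C * t)) * exp (C * s) = (‖x‖ + 1) * exp (C * (t + s)) := by
          rw [mul_assoc, ← Real.exp_add]; ring_nf
        linarith
      have hstart : ‖z'' - y 0‖ ≤ exp (-((L:ℝ) * s)) := by
        rw [h0]
        calc ‖z'' - z‖ ≤ ‖x' - x‖ * exp ((L:ℝ) * t) := hz''
        _ ≤ exp (-((L:ℝ) * (t + s))) * exp ((L:ℝ) * t) := by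
            apply mul_le_mul_of_nonneg_right hx' (Real.exp_nonneg _)
        _ = exp (-((L:ℝ) * s)) := by rw [← Real.exp_add]; ring_nf
      have hk : s ≤ (Nat.ceil (s / stepSize C B) : ℕ) * stepSize C B := by
        have hε : 0 < stepSize C B := stepSize_pos hC hB
        have := Nat.le_ceil (s / stepSize C B)
        rw [div_le_iff₀ hε] at this
        calc s ≤ s / stepSize C B * stepSize C B := by rw [div_mul_cancel₀]; exact hε.ne'
        _ ≤ (Nat.ceil (s / stepSize C B) : ℕ) * stepSize C B :=
            mul_le_mul_of_nonneg_right (Nat.le_ceil _) hε.le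
      obtain ⟨w', hw'reach, hw'⟩ := piece hC hlinF hB hL (Nat.ceil (s / stepSize C B)) s hs hk
        f hf y hy hyB z'' hstart
      refine ⟨w', hz''reach.trans hw'reach, ?_⟩
      rw [h0, hw] at hw'
      calc ‖w' - w‖ ≤ ‖z'' - z‖ * exp ((L:ℝ) * s) := hw'
      _ ≤ (‖x' - x‖ * exp ((L:ℝ) * t)) * exp ((L:ℝ) * s) :=
          mul_le_mul_of_nonneg_right hz'' (Real.exp_nonneg _)
      _ = ‖x' - x‖ * exp ((L:ℝ) * (t + s)) := by rw [mul_assoc, ← Real.exp_add]; ring_nf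

variable {T : Set (EuclideanSpace ℝ (Fin n))}

theorem minTime_le {x : E} {r : ℝ} (hr : 0 ≤ r) (h : ∃ z ∈ T, Reach F x r z) :
    minTime F T x ≤ ENNReal.ofReal r :=
  sInf_le ⟨r, ⟨hr, h⟩, rfl⟩

theorem minTime_ne_top_iff {x : E} :
    minTime F T x ≠ ⊤ ↔ ∃ r : ℝ, 0 ≤ r ∧ ∃ z ∈ T, Reach F x r z := by
  constructor
  · intro h
    by_contra hc
    apply h
    rw [minTime, sInf_eq_top.mpr]
    rintro a ⟨r, hr, rfl⟩
    exact absurd ⟨r, hr⟩ hc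
  · rintro ⟨r, hr, h⟩
    exact ne_top_of_le_ne_top ENNReal.ofReal_ne_top (minTime_le hr h)

theorem minTime_mem {z : E} (hz : z ∈ T) : minTime F T z = 0 :=
  le_antisymm (by simpa using minTime_le le_rfl ⟨z, hz, Reach.refl z⟩) zero_le

theorem minTime_triangle {x z : E} {t : ℝ} (h : Reach F x t z) :
    minTime F T x ≤ ENNReal.ofReal t + minTime F T z := by
  rcases eq_or_ne (minTime F T z) ⊤ with htop | htop
  · rw [htop, add_top]; exact le_top
  apply ENNReal.le_of_forall_pos_le_add
  intro ε hε _
  have hlt : minTime F T z < minTime F T z + ε := by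
    apply ENNReal.lt_add_right htop
    simpa using hε.ne'
  obtain ⟨a, ⟨r, ⟨hr0, zr, hzr, hreach⟩, rfl⟩, har⟩ := sInf_lt_iff.mp hlt
  have ht : 0 ≤ t := h.nonneg
  have : minTime F T x ≤ ENNReal.ofReal (t + r) :=
    minTime_le (by linarith) ⟨zr, hzr, h.trans hreach⟩
  calc minTime F T x ≤ ENNReal.ofReal (t + r) := this
  _ = ENNReal.ofReal t + ENNReal.ofReal r := ENNReal.ofReal_add ht hr0
  _ ≤ ENNReal.ofReal t + (minTime F T z + ε) := by
      exact add_le_add le_rfl har.le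
  _ = ENNReal.ofReal t + minTime F T z + ε := by ring

theorem nearest_frontier {z : E} (hTcl : IsClosed T) (hne : T.Nonempty) (hz : z ∉ T) :
    ∃ p ∈ frontier T, dist z p = infDist z T := by
  obtain ⟨p, hpT, hpd⟩ := hTcl.exists_infDist_eq_dist hne z
  refine ⟨p, ⟨subset_closure hpT, ?_⟩, hpd.symm⟩
  intro hint
  obtain ⟨ε, hε, hball⟩ := Metric.isOpen_iff.mp isOpen_interior p hint
  have hd : 0 < dist z p := by
    rw [dist_pos]
    rintro rfl
    exact hz hpT
  set c : ℝ := min ε (dist z p) / (2 * dist z p) with hc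
  have hc0 : 0 < c := div_pos (lt_min hε hd) (by linarith)
  have hc1 : c ≤ 1 / 2 := by
    rw [hc, div_le_div_iff₀ (by linarith) (by norm_num)]
    have := min_le_right ε (dist z p)
    nlinarith
  have hmem : p + c • (z - p) ∈ T := by
    apply interior_subset
    apply hball
    rw [mem_ball]
    have heq : dist p (p + c • (z - p)) = c * dist z p := by
      rw [dist_eq_norm]
      have : p - (p + c • (z - p)) = (-c) • (z - p) := by
        rw [neg_smul]; abel
      rw [this, norm_smul, Real.norm_eq_abs, abs_neg, abs_of_nonneg hc0.le,
        dist_eq_norm, norm_sub_rev]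
    rw [dist_comm, heq]
    have hm : c * dist z p ≤ min ε (dist z p) / 2 := by
      rw [hc, div_mul_eq_mul_div, mul_comm]
      rw [div_le_div_iff₀ (by linarith) (by norm_num)]
      nlinarith [min_le_right ε (dist z p), lt_min hε hd]
    calc c * dist z p ≤ min ε (dist z p) / 2 := hm
    _ < ε := by nlinarith [min_le_left ε (dist z p), lt_min hε hd]
  have h1 : dist z (p + c • (z - p)) = (1 - c) * dist z p := by
    have : z - (p + c • (z - p)) = (1 - c) • (z - p) := by
      rw [sub_smul, one_smul]; abel
    rw [dist_eq_norm, this, norm_smul]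
    rw [Real.norm_eq_abs, abs_of_nonneg (by linarith), dist_eq_norm]
  have h2 : infDist z T ≤ (1 - c) * dist z p := h1 ▸ infDist_le_dist_of_mem hmem
  rw [hpd] at h2
  nlinarith

theorem target (hTcl : IsClosed T) (hne : T.Nonempty) {ω : ℝ → ℝ} (hω : IsModulus ω)
    (hbnd : ∀ x₀ ∈ frontier T, ∃ W ∈ 𝓝 x₀, ∃ C₀ : ℝ, 0 ≤ C₀ ∧
      ∀ z ∈ W, minTime F T z ≠ ⊤ ∧ (minTime F T z).toReal ≤ C₀ * ω (infDist z T)) :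
    ∀ R : ℝ, 0 ≤ R → ∃ η > (0:ℝ), η ≤ 1 ∧ ∃ C₀ : ℝ, 0 ≤ C₀ ∧
      ∀ z' : E, ‖z'‖ ≤ R → infDist z' T ≤ η →
        minTime F T z' ≠ ⊤ ∧ (minTime F T z').toReal ≤ C₀ * ω (infDist z' T) := by
  intro R hR
  set K := frontier T ∩ closedBall (0:E) (R + 2) with hK
  have hKcomp : IsCompact K := (isCompact_closedBall (0:E) (R + 2)).inter_left isClosed_frontier
  have key : ∀ x₀ : E, ∃ ρ : ℝ, 0 < ρ ∧ ∃ c : ℝ, 0 ≤ c ∧ (x₀ ∈ K →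
      ∀ z ∈ ball x₀ ρ, minTime F T z ≠ ⊤ ∧ (minTime F T z).toReal ≤ c * ω (infDist z T)) := by
    intro x₀
    by_cases hx₀ : x₀ ∈ K
    · obtain ⟨W, hW, c, hc, hprop⟩ := hbnd x₀ hx₀.1
      obtain ⟨ρ, hρ, hb⟩ := Metric.mem_nhds_iff.mp hW
      exact ⟨ρ, hρ, c, hc, fun _ z hz => hprop z (hb hz)⟩
    · exact ⟨1, one_pos, 0, le_refl _, fun h => absurd h hx₀⟩
  choose ρ hρ c hc hprop using key
  obtain ⟨t, htK, hcov⟩ := hKcomp.elim_nhds_subcover (fun x => ball x (ρ x / 2))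
    (fun x _ => ball_mem_nhds x (half_pos (hρ x)))
  rcases t.eq_empty_or_nonempty with hte | ht
  · -- the relevant part of the frontier is empty: all nearby points are in T
    subst hte
    refine ⟨1/2, by norm_num, by norm_num, 0, le_refl _, ?_⟩
    intro z' hz'R hz'd
    have hzT : z' ∈ T := by
      by_contra hzT
      obtain ⟨p, hp, hpd⟩ := nearest_frontier hTcl hne hzT
      have hpK : p ∈ K := by
        refine ⟨hp, ?_⟩
        rw [mem_closedBall_zero_iff]
        have h1 : ‖p‖ ≤ ‖z'‖ + dist z' p := by
          rw [dist_eq_norm]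
          calc ‖p‖ = ‖z' - (z' - p)‖ := by congr 1; abel
          _ ≤ ‖z'‖ + ‖z' - p‖ := norm_sub_le _ _
        rw [hpd] at h1
        linarith
      have := hcov hpK
      simpa using this
    rw [minTime_mem hzT]
    refine ⟨by simp, by simp⟩
  · set η := min 1 (t.inf' ht fun x => ρ x / 2) with hη
    have hηpos : 0 < η := lt_min one_pos ((Finset.lt_inf'_iff ht).mpr fun x _ => half_pos (hρ x))
    have hC0 : 0 ≤ t.sup' ht c := by
      obtain ⟨x0, hx0⟩ := ht
      exact le_trans (hc x0) (Finset.le_sup' c hx0)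
    refine ⟨η, hηpos, min_le_left _ _, t.sup' ht c, hC0, ?_⟩
    intro z' hz'R hz'd
    by_cases hzT : z' ∈ T
    · rw [minTime_mem hzT]
      refine ⟨by simp, ?_⟩
      simp only [ENNReal.toReal_zero]
      exact mul_nonneg hC0 (hω.1 _)
    obtain ⟨p, hp, hpd⟩ := nearest_frontier hTcl hne hzT
    have hpK : p ∈ K := by
      refine ⟨hp, ?_⟩
      rw [mem_closedBall_zero_iff]
      have h1 : ‖p‖ ≤ ‖z'‖ + dist z' p := by
        rw [dist_eq_norm]
        calc ‖p‖ = ‖z' - (z' - p)‖ := by congr 1; abel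
        _ ≤ ‖z'‖ + ‖z' - p‖ := norm_sub_le _ _
      have hη1 : η ≤ 1 := min_le_left _ _
      have : dist z' p ≤ 1 := by rw [hpd]; linarith
      linarith
    have := hcov hpK
    simp only [Set.mem_iUnion] at this
    obtain ⟨xi, hxi, hpball⟩ := this
    have hηρ : η ≤ ρ xi / 2 := le_trans (min_le_right _ _) (Finset.inf'_le _ hxi)
    have hz'ball : z' ∈ ball xi (ρ xi) := by
      rw [mem_ball]
      have h1 : dist z' xi ≤ dist z' p + dist p xi := dist_triangle _ _ _
      have h2 : dist p xi < ρ xi / 2 := by rwa [mem_ball] at hpball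
      have h3 : dist z' p ≤ ρ xi / 2 := by rw [hpd]; linarith
      linarith
    obtain ⟨hnt, hb⟩ := hprop xi (htK xi hxi) z' hz'ball
    refine ⟨hnt, hb.trans ?_⟩
    exact mul_le_mul_of_nonneg_right (Finset.le_sup' c hxi) (hω.1 _)

theorem main_estimate (hTcl : IsClosed T) (hne : T.Nonempty)
    (hLip : UnifLocLipschitz F) (hLin : UnifLinBounded F) {ω : ℝ → ℝ} (hω : IsModulus ω)
    (hbnd : ∀ x₀ ∈ frontier T, ∃ W ∈ 𝓝 x₀, ∃ C₀ : ℝ, 0 ≤ C₀ ∧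
      ∀ z ∈ W, minTime F T z ≠ ⊤ ∧ (minTime F T z).toReal ≤ C₀ * ω (infDist z T)) :
    ∀ R Tm : ℝ, 0 ≤ R → 0 ≤ Tm → ∃ δ : ℝ, 0 < δ ∧ ∃ C₀ C₁ : ℝ, 0 ≤ C₀ ∧ 0 ≤ C₁ ∧
      ∀ x x' : E, ‖x‖ ≤ R → ‖x' - x‖ ≤ δ → ∀ r : ℝ, 0 ≤ r → r ≤ Tm →
      (∃ z ∈ T, Reach F x r z) →
      minTime F T x' ≤ ENNReal.ofReal (r + C₀ * ω (C₁ * ‖x' - x‖)) := by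
  intro R Tm hR hTm
  obtain ⟨Cl, hCl, hlin⟩ := hLin
  set C := Cl + 1 with hCdef
  have hC : 1 ≤ C := by linarith
  have hlinF : ∀ f ∈ F, ∀ x : E, ‖f x‖ ≤ C * (‖x‖ + 1) := by
    intro f hf x
    have := hlin f hf x
    nlinarith [norm_nonneg x, norm_nonneg (f x)]
  set B := (R + 1) * exp (C * Tm) with hBdef
  have hB1 : 1 ≤ B := by
    have h1 : (1:ℝ) ≤ R + 1 := by linarith
    have h2 : (1:ℝ) ≤ exp (C * Tm) := Real.one_le_exp (by positivity)
    nlinarith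
  have hB : 0 ≤ B := by linarith
  obtain ⟨L, hL⟩ := hLip (closedBall (0:E) (B + 3)) isBounded_closedBall
  obtain ⟨η, hη, hη1, C₀T, hC₀T, htarget⟩ := target hTcl hne hω hbnd (B + 1) (by linarith)
  set C₁ := exp ((L:ℝ) * Tm) with hC₁def
  have hC₁ : 1 ≤ C₁ := Real.one_le_exp (mul_nonneg L.coe_nonneg hTm)
  set δ := min (exp (-((L:ℝ) * Tm))) (η * exp (-((L:ℝ) * Tm))) with hδdef
  have hδpos : 0 < δ := lt_min (Real.exp_pos _) (mul_pos hη (Real.exp_pos _))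
  refine ⟨δ, hδpos, C₀T, C₁, hC₀T, by linarith, ?_⟩
  rintro x x' hxR hx'δ r hr0 hrTm ⟨z, hzT, hreach⟩
  have hexpr : exp (C * r) ≤ exp (C * Tm) := Real.exp_le_exp.mpr (by nlinarith)
  have hxt : (‖x‖ + 1) * exp (C * r) ≤ B := by
    rw [hBdef]
    have h1 : ‖x‖ + 1 ≤ R + 1 := by linarith
    nlinarith [Real.exp_pos (C * r), norm_nonneg x]
  have hLrTm : exp (-((L:ℝ) * Tm)) ≤ exp (-((L:ℝ) * r)) := by
    apply Real.exp_le_exp.mpr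
    have : (L:ℝ) * r ≤ (L:ℝ) * Tm := mul_le_mul_of_nonneg_left hrTm L.coe_nonneg
    linarith
  have hx'2 : ‖x' - x‖ ≤ exp (-((L:ℝ) * r)) :=
    le_trans (hx'δ.trans (min_le_left _ _)) hLrTm
  obtain ⟨z', hz'reach, hz'⟩ := replay hC hlinF hB hL hreach hxt x' hx'2
  have hexpLr : exp ((L:ℝ) * r) ≤ C₁ := by
    rw [hC₁def]
    apply Real.exp_le_exp.mpr
    exact mul_le_mul_of_nonneg_left hrTm L.coe_nonneg
  have hz'C₁ : ‖z' - z‖ ≤ C₁ * ‖x' - x‖ := by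
    calc ‖z' - z‖ ≤ ‖x' - x‖ * exp ((L:ℝ) * r) := hz'
    _ ≤ ‖x' - x‖ * C₁ := mul_le_mul_of_nonneg_left hexpLr (norm_nonneg _)
    _ = C₁ * ‖x' - x‖ := mul_comm _ _
  have hz'η : ‖z' - z‖ ≤ η := by
    have h1 : ‖x' - x‖ ≤ η * exp (-((L:ℝ) * Tm)) := hx'δ.trans (min_le_right _ _)
    have h2 : C₁ * ‖x' - x‖ ≤ C₁ * (η * exp (-((L:ℝ) * Tm))) :=
      mul_le_mul_of_nonneg_left h1 (by linarith)
    have h3 : C₁ * (η * exp (-((L:ℝ) * Tm))) = η := by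
      rw [hC₁def, ← mul_assoc, mul_comm (exp _) η, mul_assoc, ← Real.exp_add]
      simp
    linarith [hz'C₁]
  have hinf : infDist z' T ≤ ‖z' - z‖ := by
    rw [← dist_eq_norm]
    exact infDist_le_dist_of_mem hzT
  have hzn : ‖z‖ + 1 ≤ B := le_trans (reach_norm hC hlinF hreach) hxt
  have hz'n : ‖z'‖ ≤ B + 1 := by
    have h1 : ‖z'‖ ≤ ‖z' - z‖ + ‖z‖ := by
      calc ‖z'‖ = ‖(z' - z) + z‖ := by congr 1; abel
      _ ≤ ‖z' - z‖ + ‖z‖ := norm_add_le _ _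
    linarith
  obtain ⟨hnt, hbT⟩ := htarget z' hz'n (hinf.trans hz'η)
  have hωmono : ω (infDist z' T) ≤ ω (C₁ * ‖x' - x‖) := hω.2.1 (hinf.trans hz'C₁)
  have hA : (minTime F T z').toReal ≤ C₀T * ω (C₁ * ‖x' - x‖) :=
    hbT.trans (mul_le_mul_of_nonneg_left hωmono hC₀T)
  have hz'le : minTime F T z' ≤ ENNReal.ofReal (C₀T * ω (C₁ * ‖x' - x‖)) := by
    rw [← ENNReal.ofReal_toReal hnt]
    exact ENNReal.ofReal_le_ofReal hA
  calc minTime F T x' ≤ ENNReal.ofReal r + minTime F T z' := minTime_triangle hz'reach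
  _ ≤ ENNReal.ofReal r + ENNReal.ofReal (C₀T * ω (C₁ * ‖x' - x‖)) := add_le_add le_rfl hz'le
  _ = ENNReal.ofReal (r + C₀T * ω (C₁ * ‖x' - x‖)) := (ENNReal.ofReal_add hr0
      (mul_nonneg hC₀T (hω.1 _))).symm


end AuxiliaryLemmas

/-- propagation of regularity: if the minimum time to reach the closed target 𝒯
satisfies T(z) ≤ C₀ ω(d(z,𝒯)) near every boundary point of 𝒯, for a modulus ω, then the
controllable set ℛ is open and T has, on each bounded V with closure in ℛ, the modulus of
continuity C ω(C₁ |z₁−z₂|) for |z₁−z₂| ≤ β. -/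
theorem stmt_6 {n : ℕ} (F : Set (EuclideanSpace ℝ (Fin n) → EuclideanSpace ℝ (Fin n)))
    (T : Set (EuclideanSpace ℝ (Fin n))) (hTcl : IsClosed T)
    (hLip : UnifLocLipschitz F) (hLin : UnifLinBounded F)
    (ω : ℝ → ℝ) (hω : IsModulus ω)
    (hbnd : ∀ x₀ ∈ frontier T, ∃ W ∈ 𝓝 x₀, ∃ C₀ : ℝ, 0 ≤ C₀ ∧
      ∀ z ∈ W, minTime F T z ≠ ⊤ ∧
        (minTime F T z).toReal ≤ C₀ * ω (infDist z T)) :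
    IsOpen {x | minTime F T x ≠ ⊤} ∧
    ∀ V : Set (EuclideanSpace ℝ (Fin n)), Bornology.IsBounded V →
      closure V ⊆ {x | minTime F T x ≠ ⊤} →
      ∃ C C₁ : ℝ, 0 ≤ C ∧ 0 ≤ C₁ ∧ ∃ β > (0 : ℝ), ∀ z₁ ∈ V, ∀ z₂ ∈ V, ‖z₁ - z₂‖ ≤ β →
        |(minTime F T z₁).toReal - (minTime F T z₂).toReal| ≤ C * ω (C₁ * ‖z₁ - z₂‖) := by
  by_cases hne : T.Nonempty
  swap
  · -- empty target: nothing is reachable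
    have hempty : ∀ x : EuclideanSpace ℝ (Fin n), minTime F T x = ⊤ := by
      intro x
      rw [minTime, sInf_eq_top.mpr]
      rintro a ⟨r, ⟨hr, z, hz, _⟩, rfl⟩
      exact absurd ⟨z, hz⟩ hne
    constructor
    · have h : {x : EuclideanSpace ℝ (Fin n) | minTime F T x ≠ ⊤} = ∅ := by
        ext x; simp [hempty x]
      rw [h]; exact isOpen_empty
    · intro V hV hVsub
      have hVe : V = ∅ := by
        rw [Set.eq_empty_iff_forall_notMem]
        intro x hx
        exact (hVsub (subset_closure hx)) (hempty x)
      exact ⟨0, 0, le_rfl, le_rfl, 1, one_pos, by simp [hVe]⟩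
  constructor
  · -- openness of the controllable set
    rw [Metric.isOpen_iff]
    intro x hx
    obtain ⟨r, hr0, hrw⟩ := minTime_ne_top_iff.mp hx
    obtain ⟨δ, hδ, C₀, C₁, _, _, hmain⟩ :=
      main_estimate hTcl hne hLip hLin hω hbnd ‖x‖ r (norm_nonneg x) hr0
    refine ⟨δ, hδ, fun x' hx' => ?_⟩
    have hx'x : ‖x' - x‖ ≤ δ := by
      rw [mem_ball, dist_eq_norm] at hx'
      exact hx'.le
    exact ne_top_of_le_ne_top ENNReal.ofReal_ne_top
      (hmain x x' le_rfl hx'x r hr0 le_rfl hrw)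
  · intro V hV hVsub
    rcases V.eq_empty_or_nonempty with rfl | hVne
    · exact ⟨0, 0, le_rfl, le_rfl, 1, one_pos, by simp⟩
    have hcVcomp : IsCompact (closure V) :=
      Metric.isCompact_of_isClosed_isBounded isClosed_closure hV.closure
    obtain ⟨Rv₀, hRv₀⟩ := hV.closure.subset_closedBall (0 : EuclideanSpace ℝ (Fin n))
    set Rv := max Rv₀ 0 with hRvdef
    have hRv0 : 0 ≤ Rv := le_max_right _ _
    have hRv : ∀ x ∈ closure V, ‖x‖ ≤ Rv := by
      intro x hx
      have := hRv₀ hx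
      rw [mem_closedBall_zero_iff] at this
      exact this.trans (le_max_left _ _)
    -- local uniform bound on the minimum time
    have hcover : ∀ x : EuclideanSpace ℝ (Fin n), ∃ δx : ℝ, 0 < δx ∧ ∃ bx : ℝ, 0 ≤ bx ∧ (x ∈ closure V →
        ∀ x' : EuclideanSpace ℝ (Fin n), ‖x' - x‖ ≤ δx → minTime F T x' ≤ ENNReal.ofReal bx) := by
      intro x
      by_cases hxc : x ∈ closure V
      · have hx := hVsub hxc
        obtain ⟨r, hr0, hrw⟩ := minTime_ne_top_iff.mp hx
        obtain ⟨δ, hδ, C₀, C₁, hC₀, hC₁, hmain⟩ :=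
          main_estimate hTcl hne hLip hLin hω hbnd ‖x‖ r (norm_nonneg x) hr0
        refine ⟨δ, hδ, r + C₀ * ω (C₁ * δ),
          add_nonneg hr0 (mul_nonneg hC₀ (hω.1 _)), fun _ x' hx' => ?_⟩
        refine (hmain x x' le_rfl hx' r hr0 le_rfl hrw).trans (ENNReal.ofReal_le_ofReal ?_)
        have h1 : ω (C₁ * ‖x' - x‖) ≤ ω (C₁ * δ) :=
          hω.2.1 (mul_le_mul_of_nonneg_left hx' hC₁)
        nlinarith
      · exact ⟨1, one_pos, 0, le_rfl, fun h => absurd h hxc⟩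
    choose δx hδx bx hbx hloc using hcover
    obtain ⟨t, htc, hcov⟩ := hcVcomp.elim_nhds_subcover (fun x => ball x (δx x))
      (fun x _ => ball_mem_nhds x (hδx x))
    have ht : t.Nonempty := by
      obtain ⟨v, hv⟩ := hVne
      have := hcov (subset_closure hv)
      simp only [Set.mem_iUnion] at this
      obtain ⟨xi, hxi, _⟩ := this
      exact ⟨xi, hxi⟩
    set Tm := t.sup' ht bx with hTmdef
    have hTm0 : 0 ≤ Tm := by
      obtain ⟨x0, hx0⟩ := ht
      exact le_trans (hbx x0) (Finset.le_sup' bx hx0)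
    have hTmAll : ∀ x ∈ closure V, minTime F T x ≤ ENNReal.ofReal Tm := by
      intro x hx
      have := hcov hx
      simp only [Set.mem_iUnion] at this
      obtain ⟨xi, hxi, hball⟩ := this
      rw [mem_ball, dist_eq_norm] at hball
      refine (hloc xi (htc xi hxi) x hball.le).trans (ENNReal.ofReal_le_ofReal ?_)
      exact Finset.le_sup' bx hxi
    obtain ⟨δ, hδ, C₀, C₁, hC₀, hC₁, hmain⟩ :=
      main_estimate hTcl hne hLip hLin hω hbnd Rv (Tm + 1) hRv0 (by linarith)
    refine ⟨C₀, C₁, hC₀, hC₁, δ, hδ, ?_⟩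
    have hone : ∀ z₁ ∈ V, ∀ z₂ ∈ V, ‖z₁ - z₂‖ ≤ δ →
        (minTime F T z₁).toReal ≤ (minTime F T z₂).toReal + C₀ * ω (C₁ * ‖z₁ - z₂‖) := by
      intro z₁ h₁ z₂ h₂ hd
      have h2top : minTime F T z₂ ≤ ENNReal.ofReal Tm := hTmAll z₂ (subset_closure h₂)
      have h2ne : minTime F T z₂ ≠ ⊤ := ne_top_of_le_ne_top ENNReal.ofReal_ne_top h2top
      have h2Tm : (minTime F T z₂).toReal ≤ Tm := ENNReal.toReal_le_of_le_ofReal hTm0 h2top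
      have hkey : ∀ ε : ℝ, 0 < ε →
          (minTime F T z₁).toReal ≤ (minTime F T z₂).toReal + C₀ * ω (C₁ * ‖z₁ - z₂‖) + ε := by
        intro ε hε
        set ε' := min ε 1 with hε'def
        have hε'pos : 0 < ε' := lt_min hε one_pos
        have hε'1 : ε' ≤ 1 := min_le_right _ _
        have hlt : minTime F T z₂ < minTime F T z₂ + ENNReal.ofReal ε' :=
          ENNReal.lt_add_right h2ne (ENNReal.ofReal_pos.mpr hε'pos).ne'
        obtain ⟨a, ⟨r, ⟨hr0, zz, hzz, hreach⟩, rfl⟩, har⟩ := sInf_lt_iff.mp hlt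
        have hr_le : r ≤ (minTime F T z₂).toReal + ε' := by
          have h5 : ENNReal.ofReal r <
              ENNReal.ofReal ((minTime F T z₂).toReal + ε') := by
            rwa [ENNReal.ofReal_add ENNReal.toReal_nonneg hε'pos.le,
              ENNReal.ofReal_toReal h2ne]
          exact ((ENNReal.ofReal_lt_ofReal_iff_of_nonneg hr0).mp h5).le
        have hrTm : r ≤ Tm + 1 := by linarith
        have h6 := hmain z₂ z₁ (hRv z₂ (subset_closure h₂)) hd r hr0 hrTm ⟨zz, hzz, hreach⟩
        have h7 : (minTime F T z₁).toReal ≤ r + C₀ * ω (C₁ * ‖z₁ - z₂‖) :=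
          ENNReal.toReal_le_of_le_ofReal
            (add_nonneg hr0 (mul_nonneg hC₀ (hω.1 _))) h6
        have hε'ε : ε' ≤ ε := min_le_left _ _
        linarith
      by_contra hcon
      push_neg at hcon
      have := hkey (((minTime F T z₁).toReal -
        ((minTime F T z₂).toReal + C₀ * ω (C₁ * ‖z₁ - z₂‖))) / 2) (by linarith)
      linarith
    intro z₁ h₁ z₂ h₂ hd
    rw [abs_sub_le_iff]
    constructor
    · have := hone z₁ h₁ z₂ h₂ hd
      linarith
    · have hd' : ‖z₂ - z₁‖ ≤ δ := by rw [norm_sub_rev]; exact hd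
      have := hone z₂ h₂ z₁ h₁ hd'
      rw [norm_sub_rev z₂ z₁] at this
      linarith
end
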